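/- Let X be a geodesic Gromov-hyperbolic metric space and let B be a non-elementary subset of Isom(X). Then B is non-arithmetic if and only if ℓ_sub(B) ≠ ℓ(B). -/

import Mathlib

open MeasureTheory ProbabilityTheory Filter Topology Pointwise

noncomputable section

namespace BMS

/-- The Gromov product `(y,z)_x := (d(y,x) + d(z,x) - d(y,z))/2`. -/
def gp {X : Type*} [MetricSpace X] (x y z : X) : ℝ :=
  (dist y x + dist z x - dist y z) / 2

/-- `X` is `δ`-hyperbolic. -/
def HypWith (δ : ℝ) (X : Type*) [MetricSpace X] : Prop :=
  ∀ x₀ x₁ x₂ x₃ : X, min (gp x₀ x₃ x₁) (gp x₀ x₃ x₂) - δ ≤ gp x₀ x₁ x₂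

/-- `X` is Gromov-hyperbolic. -/
def GromovHyperbolic (X : Type*) [MetricSpace X] : Prop :=
  ∃ δ : ℝ, 0 < δ ∧ HypWith δ X

/-- `X` is a geodesic metric space: any two points are joined by an isometrically
parametrized path. -/
def GeodesicSpace (X : Type*) [MetricSpace X] : Prop :=
  ∀ x y : X, ∃ f : ℝ → X, f 0 = x ∧ f (dist x y) = y ∧
    ∀ s ∈ Set.Icc (0 : ℝ) (dist x y), ∀ t ∈ Set.Icc (0 : ℝ) (dist x y),
      dist (f s) (f t) = |s - t|

/-- The action of `Γ` on `X` is by isometries. -/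
def IsIsomAction (Γ X : Type*) [Group Γ] [MetricSpace X] [MulAction Γ X] : Prop :=
  ∀ (g : Γ) (x y : X), dist (g • x) (g • y) = dist x y

/-- The positions of the random walk: `walk ω n = ω 1 * ⋯ * ω n`. -/
def walk {Γ Ω : Type*} [Group Γ] (ω : ℕ → Ω → Γ) : ℕ → Ω → Γ
  | 0 => fun _ => 1
  | n + 1 => fun ρ => walk ω n ρ * ω (n + 1) ρ

/-- Extended-real valued logarithm of an extended nonnegative real, with `elog 0 = ⊥`. -/
def elog (x : ENNReal) : EReal :=
  if x = 0 then ⊥ else ((Real.log x.toReal : ℝ) : EReal)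

/-- `(1/n)·log P(Z n ∈ R)`, as an extended real number. -/
def logProbRate {Ω : Type*} [MeasurableSpace Ω] (P : Measure Ω) (Z : ℕ → Ω → ℝ)
    (R : Set ℝ) (n : ℕ) : EReal :=
  (((n : ℝ)⁻¹ : ℝ) : EReal) * elog (P {ρ | Z n ρ ∈ R})

/-- The sequence of real random variables `Z n` satisfies a (full) large deviation
principle under `P` with rate function `I`. -/
def HasLDP {Ω : Type*} [MeasurableSpace Ω] (P : Measure Ω) (Z : ℕ → Ω → ℝ)
    (I : ℝ → ENNReal) : Prop :=
  LowerSemicontinuous I ∧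
  ∀ R : Set ℝ, MeasurableSet R →
    (-(⨅ α ∈ interior R, ((I α : EReal))) ≤ liminf (logProbRate P Z R) atTop ∧
      limsup (logProbRate P Z R) atTop ≤ -(⨅ α ∈ closure R, ((I α : EReal))))

/-- Weak large deviation principle: the lower bound holds for all measurable sets and
the upper bound for bounded measurable sets. -/
def HasWeakLDP {Ω : Type*} [MeasurableSpace Ω] (P : Measure Ω) (Z : ℕ → Ω → ℝ)
    (I : ℝ → ENNReal) : Prop :=
  LowerSemicontinuous I ∧
  ∀ R : Set ℝ, MeasurableSet R →
    (-(⨅ α ∈ interior R, ((I α : EReal))) ≤ liminf (logProbRate P Z R) atTop ∧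
      (Bornology.IsBounded R →
        limsup (logProbRate P Z R) atTop ≤ -(⨅ α ∈ closure R, ((I α : EReal)))))

/-- Convexity of an `[0,∞]`-valued function on `ℝ`. -/
def ConvexRate (I : ℝ → ENNReal) : Prop :=
  ∀ x y t : ℝ, 0 ≤ t → t ≤ 1 →
    I (t * x + (1 - t) * y) ≤ ENNReal.ofReal t * I x + ENNReal.ofReal (1 - t) * I y

/-- A rate function is proper if its sublevel sets are compact. -/
def ProperRate (I : ℝ → ENNReal) : Prop :=
  ∀ c : ENNReal, c ≠ ⊤ → IsCompact {x : ℝ | I x ≤ c}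

/-- The support of a measure on a countable discrete space. -/
def measSupport {Γ : Type*} [MeasurableSpace Γ] (μ : Measure Γ) : Set Γ :=
  {g | μ {g} ≠ 0}

/-- `S` is a Schottky set with respect to the basepoint `z0`. -/
def IsSchottky {Γ X : Type*} [Group Γ] [MetricSpace X] [MulAction Γ X]
    (z0 : X) (S : Set Γ) : Prop :=
  S.Finite ∧ S.Nonempty ∧ ∃ C : ℝ, 0 < C ∧ ∀ y z : X,
    (2 / 3 : ℝ) * (S.ncard : ℝ) ≤ (({s ∈ S | gp z0 y (s • z) ≤ C} : Set Γ).ncard : ℝ)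

/-- `u : ℤ → X` is a quasi-geodesic. -/
def QuasiGeodZ {X : Type*} [MetricSpace X] (u : ℤ → X) : Prop :=
  ∃ lam C : ℝ, 1 ≤ lam ∧ 0 ≤ C ∧ ∀ m n : ℤ,
    lam⁻¹ * |(m : ℝ) - (n : ℝ)| - C ≤ dist (u m) (u n) ∧
      dist (u m) (u n) ≤ lam * |(m : ℝ) - (n : ℝ)| + C

/-- `g` is a loxodromic isometry: some (equivalently, any) orbit map `n ↦ g^n • x`
is a quasi-geodesic. -/
def IsLoxodromic (X : Type*) {Γ : Type*} [MetricSpace X] [Group Γ] [MulAction Γ X]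
    (g : Γ) : Prop :=
  ∃ x : X, QuasiGeodZ (fun n : ℤ => (g ^ n) • x)

/-- The forward (`s = true`) or backward (`s = false`) orbit ray of `g` from `z0`. -/
def raySeq {Γ X : Type*} [Group Γ] [MetricSpace X] [MulAction Γ X]
    (z0 : X) (g : Γ) (s : Bool) : ℕ → X :=
  fun n => (g ^ (if s then (n : ℤ) else -(n : ℤ))) • z0

/-- Two sequences define the same point of the Gromov boundary. -/
def SameEnd {X : Type*} [MetricSpace X] (z0 : X) (u v : ℕ → X) : Prop :=
  Tendsto (fun n => gp z0 (u n) (v n)) atTop atTop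

/-- `g` and `h` are independent loxodromic elements: both are loxodromic and their
four boundary fixed points are pairwise distinct. -/
def IndepLox {Γ X : Type*} [Group Γ] [MetricSpace X] [MulAction Γ X]
    (z0 : X) (g h : Γ) : Prop :=
  IsLoxodromic X g ∧ IsLoxodromic X h ∧
  (¬ SameEnd z0 (raySeq z0 g true) (raySeq z0 g false)) ∧
  (¬ SameEnd z0 (raySeq z0 h true) (raySeq z0 h false)) ∧
  (∀ s t : Bool, ¬ SameEnd z0 (raySeq z0 g s) (raySeq z0 h t))

/-- A set `B` of isometries is non-elementary: the subsemigroup it generates contains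
two independent loxodromic elements. -/
def NonElementarySet {Γ X : Type*} [Group Γ] [MetricSpace X] [MulAction Γ X]
    (z0 : X) (B : Set Γ) : Prop :=
  ∃ g h : Γ, g ∈ Subsemigroup.closure B ∧ h ∈ Subsemigroup.closure B ∧ IndepLox z0 g h

/-- A probability measure is non-elementary if its support is. -/
def NonElementary {Γ X : Type*} [Group Γ] [MeasurableSpace Γ] [MetricSpace X] [MulAction Γ X]
    (z0 : X) (μ : Measure Γ) : Prop :=
  NonElementarySet z0 (measSupport μ)

/-- The translation length `τ(g) := inf_x d(x, g•x)`. -/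
def translationLength (X : Type*) {Γ : Type*} [MetricSpace X] [Group Γ] [MulAction Γ X]
    (g : Γ) : ℝ :=
  ⨅ x : X, dist x (g • x)

/-- The asymptotic (stable) translation length `ℓ(g) = lim_n d(g^n • z0, z0)/n`;
by Fekete's subadditivity lemma the limit equals the infimum over `n ≥ 1`. -/
def stableLength {Γ X : Type*} [Group Γ] [MetricSpace X] [MulAction Γ X]
    (z0 : X) (g : Γ) : ℝ :=
  ⨅ n : ℕ, dist ((g ^ (n + 1)) • z0) z0 / (n + 1)

/-- `B` is non-arithmetic: some power `B^n` contains two elements with different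
asymptotic translation lengths. -/
def NonArithmetic {Γ X : Type*} [Group Γ] [MetricSpace X] [MulAction Γ X]
    (z0 : X) (B : Set Γ) : Prop :=
  ∃ (n : ℕ) (g₁ g₂ : Γ), g₁ ∈ B ^ n ∧ g₂ ∈ B ^ n ∧
    stableLength z0 g₁ ≠ stableLength z0 g₂

/-- `sup_{g ∈ B^n} d(g•z0, z0)`, valued in `[0,∞]`. -/
def dispSup {Γ X : Type*} [Group Γ] [MetricSpace X] [MulAction Γ X]
    (z0 : X) (B : Set Γ) (n : ℕ) : ENNReal :=
  ⨆ g ∈ B ^ n, ENNReal.ofReal (dist (g • z0) z0)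

/-- `inf_{g ∈ B^n} d(g•z0, z0)`, valued in `[0,∞]`. -/
def dispInf {Γ X : Type*} [Group Γ] [MetricSpace X] [MulAction Γ X]
    (z0 : X) (B : Set Γ) (n : ℕ) : ENNReal :=
  ⨅ g ∈ B ^ n, ENNReal.ofReal (dist (g • z0) z0)

/-- `μ` has a finite exponential moment:
`E[exp (λ·d(z0, ω 1 • z0))] < ∞` for some `λ > 0`. -/
def FiniteExpMoment {Γ Ω X : Type*} [Group Γ] [MetricSpace X] [MulAction Γ X]
    [MeasurableSpace Ω] (P : Measure Ω) (ω : ℕ → Ω → Γ) (z0 : X) : Prop :=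
  ∃ lam : ℝ, 0 < lam ∧
    Integrable (fun ρ => Real.exp (lam * dist ((ω 1 ρ) • z0) z0)) P

/-- The increments `ω i` are i.i.d. with common law `μ`. -/
def IIDWalk {Γ Ω : Type*} [Group Γ] [MeasurableSpace Γ] [MeasurableSpace Ω]
    (P : Measure Ω) (ω : ℕ → Ω → Γ) (μ : Measure Γ) : Prop :=
  (∀ i, Measurable (ω i)) ∧
  iIndepFun ω P ∧
  ∀ i, P.map (ω i) = μ

/-- `-(1/n)·log P(d(z_n, z0) ≤ a·n)`. -/
def belowRate {Γ Ω X : Type*} [Group Γ] [MetricSpace X] [MulAction Γ X]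
    [MeasurableSpace Ω] (P : Measure Ω) (ω : ℕ → Ω → Γ) (z0 : X) (a : ℝ) (n : ℕ) : EReal :=
  -((((n : ℝ)⁻¹ : ℝ) : EReal) * elog (P {ρ | dist ((walk ω n ρ) • z0) z0 ≤ a * n}))

/-- `-(1/n)·log P(d(z_n, z0) ≥ a·n)`. -/
def aboveRate {Γ Ω X : Type*} [Group Γ] [MetricSpace X] [MulAction Γ X]
    [MeasurableSpace Ω] (P : Measure Ω) (ω : ℕ → Ω → Γ) (z0 : X) (a : ℝ) (n : ℕ) : EReal :=
  -((((n : ℝ)⁻¹ : ℝ) : EReal) * elog (P {ρ | a * n ≤ dist ((walk ω n ρ) • z0) z0}))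

end BMS
namespace BMS
section Aux

variable {X : Type*} [MetricSpace X] {Γ : Type*} [Group Γ] [MulAction Γ X]

lemma gp_nonneg (x y z : X) : 0 ≤ gp x y z := by
  have h := dist_triangle y x z
  rw [dist_comm x z] at h
  unfold gp; linarith

lemma gp_le_left (x y z : X) : gp x y z ≤ dist y x := by
  have h := dist_triangle z y x
  rw [dist_comm z y] at h
  unfold gp; linarith

lemma gp_comm (x y z : X) : gp x y z = gp x z y := by
  unfold gp; rw [dist_comm y z]; ring

lemma gp_add_gp (x y z : X) : gp x y z + gp y x z = dist x y := by
  unfold gp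
  rw [dist_comm x y, dist_comm z y, dist_comm x z]
  ring

lemma gp_self (x y : X) : gp x x y = 0 := by
  unfold gp; rw [dist_self, dist_comm y x]; ring

lemma gp_eq_dist (x y : X) : gp x y y = dist y x := by
  unfold gp; rw [dist_self, dist_comm y x]; ring

lemma gp_lipschitz_right (x y z z' : X) : gp x y z ≤ gp x y z' + dist z z' := by
  have h2 := dist_triangle y z z'
  have h3 := dist_triangle z z' x
  unfold gp
  linarith

lemma gp_smul (hiso : IsIsomAction Γ X) (g : Γ) (x y z : X) :
    gp (g • x) (g • y) (g • z) = gp x y z := by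
  unfold gp; rw [hiso, hiso, hiso]

lemma dist_mul_smul_le (hiso : IsIsomAction Γ X) (g h : Γ) (z : X) :
    dist ((g * h) • z) z ≤ dist (g • z) z + dist (h • z) z := by
  rw [mul_smul]
  calc dist (g • h • z) z ≤ dist (g • h • z) (g • z) + dist (g • z) z := dist_triangle _ _ _
    _ = dist (h • z) z + dist (g • z) z := by rw [hiso]
    _ = _ := by ring

lemma subadd_orbit (hiso : IsIsomAction Γ X) (g : Γ) (z : X) :
    Subadditive (fun n => dist ((g ^ n) • z) z) := by
  intro m n
  simp only [pow_add]
  exact dist_mul_smul_le hiso _ _ z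

lemma stableLength_nonneg (z0 : X) (g : Γ) : 0 ≤ stableLength z0 g :=
  le_ciInf fun n => by positivity

lemma stableLength_le (z0 : X) (g : Γ) (n : ℕ) :
    stableLength z0 g ≤ dist ((g ^ (n + 1)) • z0) z0 / (n + 1) :=
  ciInf_le ⟨0, by rintro r ⟨m, rfl⟩; positivity⟩ n

lemma mul_stableLength_le (z0 : X) (g : Γ) (n : ℕ) :
    (n : ℝ) * stableLength z0 g ≤ dist ((g ^ n) • z0) z0 := by
  cases n with
  | zero => simp
  | succ m =>
    have h := stableLength_le z0 g m
    have hpos : (0:ℝ) < (m : ℝ) + 1 := by positivity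
    rw [le_div_iff₀ hpos] at h
    push_cast
    nlinarith [h]

lemma stableLength_le_dist (z0 : X) (g : Γ) : stableLength z0 g ≤ dist (g • z0) z0 := by
  have h := stableLength_le z0 g 0
  simpa using h

lemma le_stableLength_of_forall (z0 : X) (g : Γ) (c : ℝ)
    (h : ∀ n : ℕ, 1 ≤ n → c * n ≤ dist ((g ^ n) • z0) z0) : c ≤ stableLength z0 g := by
  refine le_ciInf fun n => ?_
  rw [le_div_iff₀ (by positivity : (0:ℝ) < (n:ℝ)+1)]
  have := h (n+1) (by omega)
  push_cast at this ⊢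
  linarith

lemma tendsto_stableLength (hiso : IsIsomAction Γ X) (z0 : X) (g : Γ) :
    Filter.Tendsto (fun n : ℕ => dist ((g ^ n) • z0) z0 / n) Filter.atTop
      (nhds (stableLength z0 g)) := by
  have hsub := subadd_orbit hiso g z0
  have hbdd : BddBelow (Set.range fun n : ℕ => dist ((g ^ n) • z0) z0 / n) :=
    ⟨0, by rintro r ⟨m, rfl⟩; positivity⟩
  have ht := hsub.tendsto_lim hbdd
  have heq : hsub.lim = stableLength z0 g := by
    rw [Subadditive.lim, stableLength, iInf]
    congr 1
    ext r
    constructor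
    · rintro ⟨n, hn, rfl⟩
      obtain ⟨m, rfl⟩ := Nat.exists_eq_add_of_le hn
      exact ⟨m, by push_cast; ring_nf⟩
    · rintro ⟨m, rfl⟩
      exact ⟨m + 1, by simp, by push_cast; ring_nf⟩
  rwa [heq] at ht

lemma stableLength_one (z0 : X) : stableLength z0 (1 : Γ) = 0 := by
  have : ∀ n : ℕ, dist (((1:Γ) ^ (n+1)) • z0) z0 / (n+1) = 0 := by
    intro n; simp
  rw [stableLength]
  simp only [this]
  exact ciInf_const

lemma stableLength_pow (hiso : IsIsomAction Γ X) (z0 : X) (g : Γ) (k : ℕ) :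
    stableLength z0 (g ^ k) = k * stableLength z0 g := by
  rcases Nat.eq_zero_or_pos k with hk | hk
  · subst hk; simp [pow_zero, stableLength_one]
  · have t1 := tendsto_stableLength hiso z0 (g ^ k)
    have tmul : Filter.Tendsto (fun n : ℕ => k * n) Filter.atTop Filter.atTop := by
      refine Filter.tendsto_atTop_atTop.mpr fun b => ⟨b, fun n hn => hn.trans ?_⟩
      exact Nat.le_mul_of_pos_left n hk
    have t2 := (tendsto_stableLength hiso z0 g).comp tmul
    have t3 := t2.const_mul (k:ℝ)
    have t4 : Filter.Tendsto (fun n : ℕ => dist (((g ^ k) ^ n) • z0) z0 / n) Filter.atTop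
        (nhds ((k:ℝ) * stableLength z0 g)) := by
      refine t3.congr' ?_
      filter_upwards [Filter.eventually_ge_atTop 1] with n hn
      simp only [Function.comp]
      rw [← pow_mul]
      have hn0 : (n:ℝ) ≠ 0 := by
        have : (0:ℕ) < n := hn
        positivity
      have hk0 : (k:ℝ) ≠ 0 := by
        have : (0:ℕ) < k := hk
        positivity
      push_cast
      field_simp
    exact tendsto_nhds_unique t1 t4

lemma stableLength_pos_of_lox (hiso : IsIsomAction Γ X) (z0 : X) {f : Γ}
    (hlox : IsLoxodromic X f) : 0 < stableLength z0 f := by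
  obtain ⟨x, lam, C, hlam, hC, hq⟩ := hlox
  have hkey : ∀ n : ℕ, lam⁻¹ * n - C - 2 * dist z0 x ≤ dist ((f ^ n) • z0) z0 := by
    intro n
    have h1 := (hq (n : ℤ) 0).1
    simp only [zpow_natCast, zpow_zero, one_smul] at h1
    push_cast at h1
    rw [sub_zero, abs_of_nonneg (by positivity : (0:ℝ) ≤ (n:ℝ))] at h1
    have e1 := dist_triangle ((f ^ n) • x) ((f ^ n) • z0) x
    have e2 := dist_triangle ((f ^ n) • z0) z0 x
    have e3 : dist ((f ^ n) • x) ((f ^ n) • z0) = dist x z0 := hiso _ _ _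
    have e4 : dist x z0 = dist z0 x := dist_comm _ _
    linarith
  have t1 := tendsto_stableLength hiso z0 f
  have t2 : Filter.Tendsto (fun n : ℕ => lam⁻¹ - (C + 2 * dist z0 x) / n) Filter.atTop
      (nhds (lam⁻¹ - 0)) :=
    Filter.Tendsto.sub tendsto_const_nhds (tendsto_const_div_atTop_nhds_zero_nat _)
  have hle : lam⁻¹ - 0 ≤ stableLength z0 f := by
    refine le_of_tendsto_of_tendsto t2 t1 ?_
    filter_upwards [Filter.eventually_ge_atTop 1] with n hn
    have hn0 : (0:ℝ) < n := by exact_mod_cast hn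
    have hrw : lam⁻¹ - (C + 2 * dist z0 x) / (n:ℝ) =
        (lam⁻¹ * n - (C + 2 * dist z0 x)) / n := by field_simp
    show lam⁻¹ - (C + 2 * dist z0 x) / (n:ℝ) ≤ dist ((f ^ n) • z0) z0 / n
    rw [hrw]
    exact div_le_div_of_nonneg_right (by linarith [hkey n]) hn0.le
  have : 0 < lam⁻¹ := by positivity
  linarith

lemma mem_pow_of_mem_closure {B : Set Γ} {x : Γ} (hx : x ∈ Subsemigroup.closure B) :
    ∃ n, 1 ≤ n ∧ x ∈ B ^ n := by
  induction hx using Subsemigroup.closure_induction with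
  | mem y hy => exact ⟨1, le_refl _, by rwa [pow_one]⟩
  | mul a b _ _ ha hb =>
    obtain ⟨m, hm, ha⟩ := ha
    obtain ⟨n, hn, hb⟩ := hb
    exact ⟨m + n, by omega, by rw [pow_add]; exact Set.mul_mem_mul ha hb⟩

lemma nonempty_of_nonelementary {z0 : X} {B : Set Γ} (hne : NonElementarySet z0 B) :
    B.Nonempty := by
  obtain ⟨f, -, hf, -⟩ := hne
  obtain ⟨n, hn, hfn⟩ := mem_pow_of_mem_closure hf
  by_contra h
  rw [Set.not_nonempty_iff_eq_empty] at h
  subst h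
  rw [Set.empty_pow (by omega)] at hfn
  exact hfn

end Aux
section Chain

variable {X : Type*} [MetricSpace X] {Γ : Type*} [Group Γ] [MulAction Γ X] {δ : ℝ}

lemma gp_flip (hyp : HypWith δ X) {x a b w : X} {R : ℝ}
    (hab : gp x a b ≤ R) (hwa : R + δ < gp x w a) : gp x w b ≤ R + δ := by
  have h := hyp x a b w
  rcases min_le_iff.mp (le_of_eq (rfl : min (gp x w a) (gp x w b) = _)) with _ | _
  all_goals
  · rcases le_total (gp x w a) (gp x w b) with hc | hc
    · rw [min_eq_left hc] at h; linarith
    · rw [min_eq_right hc] at h; linarith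

lemma chain_main (hyp : HypWith δ X) (hδ : 0 ≤ δ) (x : ℕ → X) (N : ℕ) (A : ℝ) (hA : 0 ≤ A)
    (hbt : ∀ i, i + 2 ≤ N → gp (x (i+1)) (x i) (x (i+2)) ≤ A)
    (hstep : ∀ i, i + 1 ≤ N → 2*A + 3*δ + 1 ≤ dist (x i) (x (i+1))) :
    ∀ n, 1 ≤ n → n + 1 ≤ N → gp (x n) (x 0) (x (n+1)) ≤ A + δ := by
  intro n
  induction n with
  | zero => omega
  | succ m ih =>
    intro _ hm2
    rcases Nat.eq_zero_or_pos m with hm | hm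
    · subst hm
      exact (hbt 0 (by omega)).trans (by linarith)
    · have ihm := ih hm (by omega)
      -- gp (x (m+1)) (x m) (x 0) = dist (x m) (x (m+1)) - gp (x m) (x 0) (x (m+1))
      have key := gp_add_gp (x m) (x (m+1)) (x 0)
      rw [gp_comm (x m) (x (m+1)) (x 0)] at key
      have hlarge : A + δ < gp (x (m+1)) (x 0) (x m) := by
        rw [gp_comm]
        have := hstep m (by omega)
        linarith
      exact gp_flip hyp (hbt m (by omega)) hlarge

lemma chain_dist (hyp : HypWith δ X) (hδ : 0 ≤ δ) (x : ℕ → X) (N : ℕ) (A : ℝ) (hA : 0 ≤ A)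
    (hbt : ∀ i, i + 2 ≤ N → gp (x (i+1)) (x i) (x (i+2)) ≤ A)
    (hstep : ∀ i, i + 1 ≤ N → 2*A + 3*δ + 1 ≤ dist (x i) (x (i+1))) :
    ∀ n, n ≤ N →
      (∑ i ∈ Finset.range n, dist (x i) (x (i+1))) - 2*n*(A+δ) ≤ dist (x 0) (x n) := by
  intro n
  induction n with
  | zero => simp
  | succ m ih =>
    intro hm1
    rcases Nat.eq_zero_or_pos m with hm | hm
    · subst hm
      simp only [zero_add, Finset.sum_range_one, Nat.cast_one]
      have := dist_nonneg (x := x 0) (y := x 1)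
      linarith
    · have ihm := ih (by omega)
      have hmain := chain_main hyp hδ x N A hA hbt hstep m hm (by omega)
      have hexp : dist (x 0) (x (m+1)) =
          dist (x 0) (x m) + dist (x (m+1)) (x m) - 2 * gp (x m) (x 0) (x (m+1)) := by
        unfold gp; ring
      rw [Finset.sum_range_succ]
      rw [dist_comm (x (m+1)) (x m)] at hexp
      push_cast
      linarith

lemma chain_interior (hyp : HypWith δ X) (hδ : 0 ≤ δ) (x : ℕ → X) (N : ℕ) (A : ℝ) (hA : 0 ≤ A)
    (hbt : ∀ i, i + 2 ≤ N → gp (x (i+1)) (x i) (x (i+2)) ≤ A)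
    (hstep : ∀ i, i + 1 ≤ N → 2*A + 3*δ + 1 ≤ dist (x i) (x (i+1))) :
    ∀ i, i ≤ N → gp (x i) (x 0) (x N) ≤ A + 2*δ := by
  intro i hiN
  rcases Nat.eq_zero_or_pos i with h0 | h0
  · subst h0; rw [gp_self]; linarith
  rcases eq_or_lt_of_le hiN with hN | hN
  · subst hN; rw [gp_comm, gp_self]; linarith
  -- now 1 ≤ i < N
  have hR : gp (x i) (x 0) (x (i+1)) ≤ A + δ := chain_main hyp hδ x N A hA hbt hstep i h0 (by omega)
  have hQ : A + 2*δ + 1 ≤ gp (x i) (x N) (x (i+1)) := by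
    rcases eq_or_lt_of_le (show i + 1 ≤ N from hN) with hiN1 | hiN1
    · rw [← hiN1, gp_comm, gp_eq_dist]
      have := hstep i (by omega)
      rw [dist_comm (x (i+1)) (x i)]
      linarith
    · -- reversed chain
      have hrev : gp (x (i+1)) (x N) (x i) ≤ A + δ := by
        have := chain_main hyp hδ (fun j => x (N - j)) N A hA
          (fun j hj => by
            have e1 : N - (j+1) = (N - (j+2)) + 1 := by omega
            have e2 : N - j = (N - (j+2)) + 2 := by omega
            simp only [e1, e2]
            rw [gp_comm]
            exact hbt (N - (j+2)) (by omega))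
          (fun j hj => by
            have e1 : N - (j+1) = (N - (j+1)) := rfl
            have e2 : N - j = (N - (j+1)) + 1 := by omega
            simp only [e2]
            rw [dist_comm]
            exact hstep (N - (j+1)) (by omega))
          (N - i - 1) (by omega) (by omega)
        simp only [Nat.sub_zero] at this
        have e3 : N - (N - i - 1) = i + 1 := by omega
        have e4 : N - (N - i - 1 + 1) = i := by omega
        rw [e3] at this
        rwa [e4] at this
      have key := gp_add_gp (x i) (x (i+1)) (x N)
      rw [gp_comm (x (i+1)) (x i) (x N)] at key
      have := hstep i (by omega)
      rw [gp_comm (x i) (x N) (x (i+1))]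
      linarith
  have hflip := gp_flip hyp (R := A + δ)
    (show gp (x i) (x (i+1)) (x 0) ≤ A + δ by rwa [gp_comm])
    (show (A + δ) + δ < gp (x i) (x N) (x (i+1)) by linarith)
  rw [gp_comm]
  linarith

end Chain
section Rays

variable {X : Type*} [MetricSpace X] {Γ : Type*} [Group Γ] [MulAction Γ X] {δ : ℝ}

/-- Auxiliary: the alternating word `g s g s ⋯`. -/
def altWord (g s : Γ) : ℕ → Γ
  | 0 => 1
  | (i+1) => altWord g s i * (if Even i then g else s)

lemma altWord_two_mul (g s : Γ) (k : ℕ) : altWord g s (2*k) = (g*s)^k := by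
  induction k with
  | zero => simp [altWord]
  | succ m ih =>
    have h1 : 2*(m+1) = (2*m+1)+1 := by ring
    rw [h1]
    show altWord g s (2*m+1) * _ = _
    have h2 : altWord g s (2*m+1) = altWord g s (2*m) * (if Even (2*m) then g else s) := rfl
    rw [h2, if_pos (even_two_mul m), if_neg (by simp [Nat.even_add_one, Nat.even_mul]), ih,
      pow_succ, mul_assoc]

lemma stableLength_mul_ge (hiso : IsIsomAction Γ X) (hyp : HypWith δ X) (hδ : 0 ≤ δ)
    (z0 : X) (g s : Γ) (A : ℝ) (hA : 0 ≤ A)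
    (h1 : gp z0 (g⁻¹ • z0) (s • z0) ≤ A) (h2 : gp z0 (s⁻¹ • z0) (g • z0) ≤ A)
    (hg : 2*A + 3*δ + 1 ≤ dist (g • z0) z0) (hs : 2*A + 3*δ + 1 ≤ dist (s • z0) z0) :
    dist (g • z0) z0 + dist (s • z0) z0 - 4*(A+δ) ≤ stableLength z0 (g*s) := by
  set x : ℕ → X := fun i => altWord g s i • z0 with hx
  have hxsucc : ∀ i, x (i+1) = altWord g s i • ((if Even i then g else s) • z0) := by
    intro i
    show altWord g s (i+1) • z0 = _
    rw [show altWord g s (i+1) = altWord g s i * (if Even i then g else s) from rfl, mul_smul]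
  have hxprev : ∀ i, x i = altWord g s (i+1) • ((if Even i then g else s)⁻¹ • z0) := by
    intro i
    show altWord g s i • z0 = _
    rw [smul_smul, show altWord g s (i+1) = altWord g s i * (if Even i then g else s) from rfl,
      mul_inv_cancel_right]
  have hstep : ∀ i, dist (x i) (x (i+1)) = dist ((if Even i then g else s) • z0) z0 := by
    intro i
    rw [hxsucc i]
    conv_lhs => rw [show x i = altWord g s i • z0 from rfl]
    rw [dist_comm, hiso, dist_comm]
  have hbt : ∀ i, gp (x (i+1)) (x i) (x (i+2)) ≤ A := by
    intro i
    have e1 : x (i+1) = altWord g s (i+1) • z0 := rfl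
    have e2 : x (i+2) = altWord g s (i+1) • ((if Even (i+1) then g else s) • z0) := hxsucc (i+1)
    rw [e1, e2, hxprev i, gp_smul hiso]
    rcases Nat.even_or_odd i with he | ho
    · rw [if_pos he, if_neg (by simp [Nat.even_add_one, he])]
      exact h1
    · rw [if_neg (by simp [Nat.not_even_iff_odd.mpr ho]),
        if_pos (by simp [Nat.even_add_one, Nat.not_even_iff_odd.mpr ho])]
      exact h2
  have hstep' : ∀ i, 2*A + 3*δ + 1 ≤ dist (x i) (x (i+1)) := by
    intro i
    rw [hstep i]
    split_ifs
    · exact hg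
    · exact hs
  have hsum : ∀ m : ℕ, (∑ i ∈ Finset.range (2*m), dist (x i) (x (i+1))) =
      m * (dist (g • z0) z0 + dist (s • z0) z0) := by
    intro m
    induction m with
    | zero => simp
    | succ m ihm =>
      have h3 : 2*(m+1) = (2*m) + 1 + 1 := by ring
      rw [h3, Finset.sum_range_succ, Finset.sum_range_succ]
      rw [hstep (2*m), hstep (2*m+1), if_pos (even_two_mul m),
        if_neg (by simp [Nat.even_add_one, Nat.even_mul])]
      rw [ihm]
      push_cast
      ring
  apply le_stableLength_of_forall
  intro k hk
  have hd := chain_dist hyp hδ x (2*k) A hA (fun i _ => hbt i) (fun i _ => hstep' i) (2*k) le_rfl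
  have hx0 : x 0 = z0 := by show altWord g s 0 • z0 = z0; rw [show altWord g s 0 = (1:Γ) from rfl, one_smul]
  have hx2k : x (2*k) = ((g*s)^k) • z0 := by show altWord g s (2*k) • z0 = _; rw [altWord_two_mul]
  rw [hsum k, hx0, hx2k] at hd
  push_cast at hd
  calc (dist (g • z0) z0 + dist (s • z0) z0 - 4*(A+δ)) * k
      = (k:ℝ) * (dist (g • z0) z0 + dist (s • z0) z0) - 2*(2*(k:ℝ))*(A+δ) := by ring
    _ ≤ dist z0 (((g*s)^k) • z0) := hd
    _ = dist (((g*s)^k) • z0) z0 := dist_comm _ _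

lemma dist_inv_smul (hiso : IsIsomAction Γ X) (g : Γ) (z0 : X) :
    dist (g⁻¹ • z0) z0 = dist (g • z0) z0 := by
  conv_lhs => rw [← hiso g (g⁻¹ • z0) z0]
  rw [smul_inv_smul, dist_comm]

/-- Points on the negative and positive `F`-rays have uniformly bounded Gromov product. -/
lemma ray_opposite (hiso : IsIsomAction Γ X) (hyp : HypWith δ X) (hδ : 0 ≤ δ)
    (z0 : X) (F : Γ) (A : ℝ) (h0A : 0 ≤ A) (hA : gp z0 (F⁻¹ • z0) (F • z0) ≤ A)
    (hgap : 2*A + 3*δ + 1 ≤ dist (F • z0) z0) (a b : ℕ) :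
    gp z0 (((F⁻¹)^a) • z0) ((F^b) • z0) ≤ A + 2*δ := by
  set x : ℕ → X := fun j => (F^(j:ℤ) * (F⁻¹)^(a:ℤ)) • z0 with hx
  have hxeq : ∀ j : ℕ, x j = (F^((j:ℤ) - (a:ℤ))) • z0 := by
    intro j
    show (F^(j:ℤ) * (F⁻¹)^(a:ℤ)) • z0 = _
    rw [inv_zpow, ← zpow_neg, ← zpow_add, sub_eq_add_neg]
  have hbt : ∀ i, gp (x (i+1)) (x i) (x (i+2)) ≤ A := by
    intro i
    have e0 : x (i+1) = (F^((i:ℤ)+1-(a:ℤ))) • z0 := by rw [hxeq]; push_cast; ring_nf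
    have e1 : x i = (F^((i:ℤ)+1-(a:ℤ))) • (F⁻¹ • z0) := by
      rw [hxeq, smul_smul, ← zpow_sub_one]
      congr 2
      push_cast
      ring
    have e2 : x (i+2) = (F^((i:ℤ)+1-(a:ℤ))) • (F • z0) := by
      rw [hxeq, smul_smul, ← zpow_add_one]
      congr 2
      push_cast
      ring
    rw [e0, e1, e2, gp_smul hiso]
    exact hA
  have hstep : ∀ i, 2*A + 3*δ + 1 ≤ dist (x i) (x (i+1)) := by
    intro i
    have e0 : x (i+1) = (F^((i:ℤ)-(a:ℤ))) • (F • z0) := by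
      rw [hxeq, smul_smul, ← zpow_add_one]
      congr 2
      push_cast
      ring
    have e1 : x i = (F^((i:ℤ)-(a:ℤ))) • z0 := hxeq i
    rw [e0, e1, hiso, dist_comm]
    exact hgap
  have hint := chain_interior hyp hδ x (a+b) A h0A (fun i _ => hbt i) (fun i _ => hstep i)
    a (by omega)
  have hxa : x a = z0 := by rw [hxeq]; simp
  have hx0 : x 0 = ((F⁻¹)^a) • z0 := by rw [hxeq]; simp [zpow_neg, inv_zpow]
  have hxab : x (a+b) = (F^b) • z0 := by
    rw [hxeq]
    have : ((a+b:ℕ):ℤ) - (a:ℤ) = (b:ℤ) := by push_cast; ring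
    rw [this, zpow_natCast]
  rw [hxa, hx0, hxab] at hint
  exact hint

/-- Lower bound for Gromov products of two points on the same ray. -/
lemma ray_same_lower (hiso : IsIsomAction Γ X) (hyp : HypWith δ X) (hδ : 0 ≤ δ)
    (z0 : X) (F : Γ) (A : ℝ) (h0A : 0 ≤ A) (hA : gp z0 (F⁻¹ • z0) (F • z0) ≤ A)
    (hgap : 2*A + 3*δ + 1 ≤ dist (F • z0) z0) (a b : ℕ) (hab : a ≤ b) :
    (a:ℝ) * (dist (F • z0) z0 - 2*(A+δ)) - (A + 2*δ) ≤ gp z0 ((F^a) • z0) ((F^b) • z0) := by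
  set x : ℕ → X := fun j => (F^j) • z0 with hx
  have hbt : ∀ i, gp (x (i+1)) (x i) (x (i+2)) ≤ A := by
    intro i
    have e1 : x i = (F^(i+1)) • (F⁻¹ • z0) := by
      show (F^i) • z0 = _
      rw [smul_smul, pow_succ, mul_inv_cancel_right]
    have e2 : x (i+2) = (F^(i+1)) • (F • z0) := by
      show (F^(i+2)) • z0 = _
      rw [smul_smul, ← pow_succ]
    rw [e1, e2, show x (i+1) = (F^(i+1)) • z0 from rfl, gp_smul hiso]
    exact hA
  have hstep : ∀ i, 2*A + 3*δ + 1 ≤ dist (x i) (x (i+1)) := by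
    intro i
    have e2 : x (i+1) = (F^i) • (F • z0) := by
      show (F^(i+1)) • z0 = _
      rw [smul_smul, ← pow_succ]
    rw [e2, show x i = (F^i) • z0 from rfl, hiso, dist_comm]
    exact hgap
  have hint := chain_interior hyp hδ x b A h0A (fun i _ => hbt i) (fun i _ => hstep i) a hab
  have hdist := chain_dist hyp hδ x b A h0A (fun i _ => hbt i) (fun i _ => hstep i) a hab
  have hsum : (∑ i ∈ Finset.range a, dist (x i) (x (i+1))) = a * dist (F • z0) z0 := by
    have : ∀ i ∈ Finset.range a, dist (x i) (x (i+1)) = dist (F • z0) z0 := by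
      intro i _
      have e2 : x (i+1) = (F^i) • (F • z0) := by
        show (F^(i+1)) • z0 = _
        rw [smul_smul, ← pow_succ]
      rw [e2, show x i = (F^i) • z0 from rfl, hiso, dist_comm]
    rw [Finset.sum_congr rfl this, Finset.sum_const, Finset.card_range, nsmul_eq_mul]
  rw [hsum] at hdist
  have hkey := gp_add_gp z0 ((F^a) • z0) ((F^b) • z0)
  have hx0 : x 0 = z0 := by show (F^0) • z0 = z0; rw [pow_zero, one_smul]
  rw [hx0] at hint hdist
  -- hint : gp (x a) z0 (x b) ≤ A + 2δ ; hdist : a * D - 2a(A+δ) ≤ dist z0 (x a)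
  have : gp ((F^a) • z0) z0 ((F^b) • z0) ≤ A + 2*δ := hint
  have hd : (a:ℝ) * dist (F • z0) z0 - 2*a*(A+δ) ≤ dist z0 ((F^a) • z0) := hdist
  linarith

end Rays
section Disp

variable {X : Type*} [MetricSpace X] {Γ : Type*} [Group Γ] [MulAction Γ X]

lemma pow_set_nonempty {B : Set Γ} (hB : B.Nonempty) (n : ℕ) : (B ^ n).Nonempty := by
  induction n with
  | zero => exact ⟨1, by rw [pow_zero]; exact Set.mem_one.mpr rfl⟩
  | succ m ih => rw [pow_succ]; exact ih.mul hB

lemma dist_le_of_mem_pow (hiso : IsIsomAction Γ X) (z0 : X) {B : Set Γ} {K : ℝ}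
    (hK : ∀ g ∈ B, dist (g • z0) z0 ≤ K) (hK0 : 0 ≤ K) :
    ∀ n : ℕ, ∀ g ∈ B ^ n, dist (g • z0) z0 ≤ (n : ℝ) * K := by
  intro n
  induction n with
  | zero =>
    intro g hg
    rw [pow_zero] at hg
    rw [Set.mem_one.mp hg]
    simp
  | succ m ih =>
    intro g hg
    rw [pow_succ] at hg
    obtain ⟨g₁, hg₁, g₂, hg₂, rfl⟩ := Set.mem_mul.mp hg
    have := dist_mul_smul_le hiso g₁ g₂ z0
    have h1 := ih g₁ hg₁
    have h2 := hK g₂ hg₂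
    push_cast
    nlinarith

/-- The real-valued infimum displacement sequence. -/
lemma dispInf_facts (hiso : IsIsomAction Γ X) (z0 : X) {B : Set Γ} (hB : B.Nonempty) :
    ∃ ui : ℕ → ℝ, Subadditive ui ∧ (∀ n, 0 ≤ ui n) ∧
      (∀ n, ∀ g ∈ B ^ n, ui n ≤ dist (g • z0) z0) ∧
      (∀ n, ∀ ε : ℝ, 0 < ε → ∃ g ∈ B ^ n, dist (g • z0) z0 < ui n + ε) ∧
      (∀ n, dispInf z0 B n = ENNReal.ofReal (ui n)) := by
  set D : Γ → ℝ := fun g => dist (g • z0) z0 with hD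
  set ui : ℕ → ℝ := fun n => sInf (D '' (B ^ n)) with hui
  have hne : ∀ n, (D '' (B ^ n)).Nonempty := fun n => (pow_set_nonempty hB n).image D
  have hbd : ∀ n, BddBelow (D '' (B ^ n)) := by
    intro n
    exact ⟨0, by rintro r ⟨g, hg, rfl⟩; exact dist_nonneg⟩
  have hle : ∀ n, ∀ g ∈ B ^ n, ui n ≤ D g := fun n g hg => csInf_le (hbd n) ⟨g, hg, rfl⟩
  have happrox : ∀ n, ∀ ε : ℝ, 0 < ε → ∃ g ∈ B ^ n, D g < ui n + ε := by
    intro n ε hε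
    obtain ⟨r, ⟨g, hg, rfl⟩, hr⟩ := exists_lt_of_csInf_lt (hne n) (by linarith : sInf (D '' (B^n)) < ui n + ε)
    exact ⟨g, hg, hr⟩
  have hnonneg : ∀ n, 0 ≤ ui n := by
    intro n
    exact Real.sInf_nonneg (by rintro r ⟨g, hg, rfl⟩; exact dist_nonneg)
  refine ⟨ui, ?_, hnonneg, hle, happrox, ?_⟩
  · -- subadditivity
    intro m n
    refine le_of_forall_pos_le_add fun ε hε => ?_
    obtain ⟨g₁, hg₁, h1⟩ := happrox m (ε/2) (by linarith)
    obtain ⟨g₂, hg₂, h2⟩ := happrox n (ε/2) (by linarith)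
    have hmem : g₁ * g₂ ∈ B ^ (m + n) := by
      rw [pow_add]; exact Set.mul_mem_mul hg₁ hg₂
    have := hle (m+n) _ hmem
    have hD12 := dist_mul_smul_le hiso g₁ g₂ z0
    simp only [hD] at *
    linarith
  · -- dispInf = ofReal ui
    intro n
    refine le_antisymm ?_ ?_
    · refine ENNReal.le_of_forall_pos_le_add fun ε hε _ => ?_
      obtain ⟨g, hg, h1⟩ := happrox n ε (by exact_mod_cast hε)
      calc dispInf z0 B n ≤ ENNReal.ofReal (D g) := biInf_le _ hg
        _ ≤ ENNReal.ofReal (ui n + ε) := ENNReal.ofReal_le_ofReal h1.le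
        _ = ENNReal.ofReal (ui n) + ENNReal.ofReal ε :=
            ENNReal.ofReal_add (hnonneg n) ε.coe_nonneg
        _ = ENNReal.ofReal (ui n) + ε := by rw [ENNReal.ofReal_coe_nnreal]
    · exact le_iInf₂ fun g hg => ENNReal.ofReal_le_ofReal (hle n g hg)

/-- The real-valued supremum displacement sequence, in the bounded case. -/
lemma dispSup_facts (hiso : IsIsomAction Γ X) (z0 : X) {B : Set Γ} (hB : B.Nonempty)
    {K : ℝ} (hK : ∀ g ∈ B, dist (g • z0) z0 ≤ K) (hK0 : 0 ≤ K) :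
    ∃ us : ℕ → ℝ, Subadditive us ∧ (∀ n, 0 ≤ us n) ∧
      (∀ n, ∀ g ∈ B ^ n, dist (g • z0) z0 ≤ us n) ∧
      (∀ n, ∀ ε : ℝ, 0 < ε → ∃ g ∈ B ^ n, us n - ε < dist (g • z0) z0) ∧
      (∀ n, dispSup z0 B n = ENNReal.ofReal (us n)) := by
  set D : Γ → ℝ := fun g => dist (g • z0) z0 with hD
  set us : ℕ → ℝ := fun n => sSup (D '' (B ^ n)) with hus
  have hne : ∀ n, (D '' (B ^ n)).Nonempty := fun n => (pow_set_nonempty hB n).image D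
  have hbd : ∀ n, BddAbove (D '' (B ^ n)) := by
    intro n
    exact ⟨n * K, by rintro r ⟨g, hg, rfl⟩; exact dist_le_of_mem_pow hiso z0 hK hK0 n g hg⟩
  have hle : ∀ n, ∀ g ∈ B ^ n, D g ≤ us n := fun n g hg => le_csSup (hbd n) ⟨g, hg, rfl⟩
  have happrox : ∀ n, ∀ ε : ℝ, 0 < ε → ∃ g ∈ B ^ n, us n - ε < D g := by
    intro n ε hε
    obtain ⟨r, ⟨g, hg, rfl⟩, hr⟩ := exists_lt_of_lt_csSup (hne n)
      (by linarith : us n - ε < sSup (D '' (B^n)))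
    exact ⟨g, hg, hr⟩
  have hnonneg : ∀ n, 0 ≤ us n := by
    intro n
    obtain ⟨g, hg⟩ := pow_set_nonempty hB n
    exact le_trans dist_nonneg (hle n g hg)
  refine ⟨us, ?_, hnonneg, hle, happrox, ?_⟩
  · intro m n
    refine csSup_le (hne (m+n)) ?_
    rintro r ⟨g, hg, rfl⟩
    rw [pow_add] at hg
    obtain ⟨g₁, hg₁, g₂, hg₂, rfl⟩ := Set.mem_mul.mp hg
    have h1 := hle m g₁ hg₁
    have h2 := hle n g₂ hg₂
    have := dist_mul_smul_le hiso g₁ g₂ z0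
    simp only [hD] at *
    linarith
  · intro n
    refine le_antisymm ?_ ?_
    · exact iSup₂_le fun g hg => ENNReal.ofReal_le_ofReal (hle n g hg)
    · refine ENNReal.le_of_forall_pos_le_add fun ε hε _ => ?_
      obtain ⟨g, hg, h1⟩ := happrox n ε (by exact_mod_cast hε)
      calc ENNReal.ofReal (us n) ≤ ENNReal.ofReal (D g + ε) := by
            exact ENNReal.ofReal_le_ofReal (by linarith)
        _ = ENNReal.ofReal (D g) + ENNReal.ofReal ε := ENNReal.ofReal_add dist_nonneg ε.coe_nonneg
        _ ≤ (⨆ g ∈ B ^ n, ENNReal.ofReal (dist (g • z0) z0)) + ε := by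
            rw [ENNReal.ofReal_coe_nnreal]
            exact add_le_add_left (le_iSup₂ (f := fun g _ => ENNReal.ofReal (D g)) g hg) _

/-- Conversion of a Fekete limit to the `ENNReal` statement. -/
lemma tendsto_disp_ennreal (v : ℕ → ℝ) (w : ℕ → ENNReal) (hw : ∀ n, w n = ENNReal.ofReal (v n))
    (hsub : Subadditive v) (hv0 : ∀ n, 0 ≤ v n) :
    Filter.Tendsto (fun n : ℕ => w n / n) Filter.atTop (nhds (ENNReal.ofReal hsub.lim)) := by
  have hbdd : BddBelow (Set.range fun n : ℕ => v n / n) :=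
    ⟨0, by rintro r ⟨m, rfl⟩; exact div_nonneg (hv0 m) (Nat.cast_nonneg m)⟩
  have ht := hsub.tendsto_lim hbdd
  have ht2 := ENNReal.tendsto_ofReal ht
  refine ht2.congr' ?_
  filter_upwards [Filter.eventually_ge_atTop 1] with n hn
  have hn0 : (0:ℝ) < n := by exact_mod_cast hn
  rw [ENNReal.ofReal_div_of_pos hn0, hw n, ENNReal.ofReal_natCast]

lemma subadd_lim_nonneg {v : ℕ → ℝ} (hsub : Subadditive v) (hv0 : ∀ n, 0 ≤ v n) :
    0 ≤ hsub.lim := by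
  have hbdd : BddBelow (Set.range fun n : ℕ => v n / n) :=
    ⟨0, by rintro r ⟨m, rfl⟩; exact div_nonneg (hv0 m) (Nat.cast_nonneg m)⟩
  have ht := hsub.tendsto_lim hbdd
  exact ge_of_tendsto ht (Filter.Eventually.of_forall fun n =>
    div_nonneg (hv0 n) (Nat.cast_nonneg n))

lemma dispSup_top_forall (hiso : IsIsomAction Γ X) (z0 : X) {B : Set Γ} (hB : B.Nonempty)
    (htop : dispSup z0 B 1 = ⊤) : ∀ n, 1 ≤ n → dispSup z0 B n = ⊤ := by
  obtain ⟨b, hb⟩ := hB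
  intro n hn
  induction n with
  | zero => omega
  | succ m ih =>
    rcases Nat.eq_zero_or_pos m with hm | hm
    · subst hm; simpa [pow_one] using htop
    · have hm' := ih hm
      by_contra hne
      have hlt : dispSup z0 B (m+1) < ⊤ := lt_top_iff_ne_top.mpr hne
      have hbound : dispSup z0 B m ≤ dispSup z0 B (m+1) + ENNReal.ofReal (dist (b • z0) z0) := by
        refine iSup₂_le fun g hg => ?_
        have hmem : g * b ∈ B ^ (m+1) := by
          rw [pow_succ]; exact Set.mul_mem_mul hg hb
        have hdist : dist (g • z0) z0 ≤ dist ((g * b) • z0) z0 + dist (b • z0) z0 := by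
          have e1 : dist (g • z0) ((g*b) • z0) = dist (b • z0) z0 := by
            rw [mul_smul, hiso g z0 (b • z0), dist_comm]
          calc dist (g • z0) z0 ≤ dist (g • z0) ((g*b) • z0) + dist ((g*b) • z0) z0 :=
                dist_triangle _ _ _
            _ = dist ((g * b) • z0) z0 + dist (b • z0) z0 := by rw [e1]; ring
        calc ENNReal.ofReal (dist (g • z0) z0)
            ≤ ENNReal.ofReal (dist ((g * b) • z0) z0 + dist (b • z0) z0) :=
              ENNReal.ofReal_le_ofReal hdist
          _ = ENNReal.ofReal (dist ((g * b) • z0) z0) + ENNReal.ofReal (dist (b • z0) z0) :=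
              ENNReal.ofReal_add dist_nonneg dist_nonneg
          _ ≤ dispSup z0 B (m+1) + ENNReal.ofReal (dist (b • z0) z0) := by
              exact add_le_add_left
                (le_iSup₂ (f := fun g _ => ENNReal.ofReal (dist (g • z0) z0)) _ hmem) _
      rw [hm'] at hbound
      have hfin : dispSup z0 B (m+1) + ENNReal.ofReal (dist (b • z0) z0) < ⊤ :=
        ENNReal.add_lt_top.mpr ⟨hlt, ENNReal.ofReal_lt_top⟩
      exact absurd (lt_of_le_of_lt hbound hfin) (lt_irrefl _)

end Disp
section Cross

variable {X : Type*} [MetricSpace X] {Γ : Type*} [Group Γ] [MulAction Γ X] {δ : ℝ}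

lemma gp_le_right (x y z : X) : gp x y z ≤ dist z x := by
  rw [gp_comm]; exact gp_le_left x z y

lemma dist_pow_le (hiso : IsIsomAction Γ X) (z0 : X) (g : Γ) (r : ℕ) :
    dist ((g ^ r) • z0) z0 ≤ r * dist (g • z0) z0 := by
  induction r with
  | zero => simp
  | succ m ih =>
    have := dist_mul_smul_le hiso (g ^ m) g z0
    rw [← pow_succ] at this
    push_cast
    nlinarith [dist_nonneg (x := g • z0) (y := z0)]

lemma pow_mem_pow_mul {B : Set Γ} {g : Γ} {n : ℕ} (hg : g ∈ B ^ n) (k : ℕ) :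
    g ^ k ∈ B ^ (n * k) := by
  induction k with
  | zero => rw [pow_zero, mul_zero, pow_zero]; exact Set.mem_one.mpr rfl
  | succ m ih =>
    rw [pow_succ, Nat.mul_succ, pow_add]
    exact Set.mul_mem_mul ih hg

lemma raySeq_true_eq (z0 : X) (g : Γ) (n : ℕ) : raySeq z0 g true n = (g ^ n) • z0 := by
  unfold raySeq
  rw [if_pos rfl, zpow_natCast]

lemma raySeq_false_eq (z0 : X) (g : Γ) (n : ℕ) : raySeq z0 g false n = ((g⁻¹) ^ n) • z0 := by
  unfold raySeq
  rw [if_neg (by simp), zpow_neg, ← inv_zpow, zpow_natCast]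

lemma not_sameEnd_frequent {z0 : X} {u v : ℕ → X} (h : ¬ SameEnd z0 u v) :
    ∃ M : ℝ, 0 ≤ M ∧ ∀ N : ℕ, ∃ n, N ≤ n ∧ gp z0 (u n) (v n) < M := by
  unfold SameEnd at h
  rw [Filter.tendsto_atTop_atTop] at h
  push_neg at h
  obtain ⟨b, hb⟩ := h
  refine ⟨max b 0, le_max_right _ _, fun N => ?_⟩
  obtain ⟨n, hn, hlt⟩ := hb N
  exact ⟨n, hn, lt_of_lt_of_le hlt (le_max_left _ _)⟩

lemma dist_pow_large (hiso : IsIsomAction Γ X) (z0 : X) {f : Γ} (hlox : IsLoxodromic X f) :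
    ∀ T : ℝ, ∃ N : ℕ, ∀ n, N ≤ n → T ≤ dist ((f ^ n) • z0) z0 := by
  obtain ⟨x, lam, C, hlam, hC, hq⟩ := hlox
  have hlam0 : 0 < lam := lt_of_lt_of_le zero_lt_one hlam
  have hkey : ∀ n : ℕ, lam⁻¹ * n - C - 2 * dist z0 x ≤ dist ((f ^ n) • z0) z0 := by
    intro n
    have h1 := (hq (n : ℤ) 0).1
    simp only [zpow_natCast, zpow_zero, one_smul] at h1
    push_cast at h1
    rw [sub_zero, abs_of_nonneg (by positivity : (0:ℝ) ≤ (n:ℝ))] at h1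
    have e1 := dist_triangle ((f ^ n) • x) ((f ^ n) • z0) x
    have e2 := dist_triangle ((f ^ n) • z0) z0 x
    have e3 : dist ((f ^ n) • x) ((f ^ n) • z0) = dist x z0 := hiso _ _ _
    have e4 : dist x z0 = dist z0 x := dist_comm _ _
    linarith
  intro T
  obtain ⟨N, hN⟩ := exists_nat_ge ((T + C + 2 * dist z0 x) * lam)
  refine ⟨N, fun n hn => ?_⟩
  have h2 : (N : ℝ) ≤ n := by exact_mod_cast hn
  have h3 : (T + C + 2 * dist z0 x) * lam ≤ (n:ℝ) := le_trans hN h2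
  have h4 : lam⁻¹ * ((T + C + 2 * dist z0 x) * lam) ≤ lam⁻¹ * n := by
    apply mul_le_mul_of_nonneg_left h3
    positivity
  have h5 : lam⁻¹ * ((T + C + 2 * dist z0 x) * lam) = T + C + 2 * dist z0 x := by
    field_simp
  rw [h5] at h4
  linarith [hkey n]

lemma ray_approx_lower (hiso : IsIsomAction Γ X) (hyp : HypWith δ X) (hδ : 0 ≤ δ)
    (z0 : X) (f F : Γ) (p : ℕ) (hp : 1 ≤ p) (hF : F = f ^ p) (M : ℝ) (hM : 0 ≤ M)
    (hAF : gp z0 (F⁻¹ • z0) (F • z0) ≤ M)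
    (hgapF : 2*M + 3*δ + 1 ≤ dist (F • z0) z0) (a n : ℕ) (han : p * a ≤ n) :
    (a:ℝ) * (dist (F • z0) z0 - 2*(M+δ)) - (M + 2*δ) - (p:ℝ) * dist (f • z0) z0
      ≤ gp z0 ((F ^ a) • z0) ((f ^ n) • z0) := by
  have hp0 : 0 < p := hp
  set t := n / p with ht
  have hat : a ≤ t := Nat.le_div_iff_mul_le hp0 |>.mpr (by rw [Nat.mul_comm]; exact han)
  have hray := ray_same_lower hiso hyp hδ z0 F M hM hAF hgapF a t hat
  have hlip := gp_lipschitz_right z0 ((F ^ a) • z0) ((F ^ t) • z0) ((f ^ n) • z0)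
  have hdistsmall : dist ((F ^ t) • z0) ((f ^ n) • z0) ≤ (p:ℝ) * dist (f • z0) z0 := by
    have hr : n = p * t + n % p := by rw [ht]; exact (Nat.div_add_mod n p).symm.trans (by ring_nf)
    have e1 : (f ^ n) = (F ^ t) * (f ^ (n % p)) := by
      rw [hF, ← pow_mul, ← pow_add, ← hr]
    rw [e1, mul_smul]
    have e2 : dist ((F ^ t) • z0) ((F ^ t) • ((f ^ (n % p)) • z0)) = dist z0 ((f ^ (n % p)) • z0) :=
      hiso _ _ _
    rw [e2, dist_comm]
    calc dist ((f ^ (n % p)) • z0) z0 ≤ (n % p : ℕ) * dist (f • z0) z0 := dist_pow_le hiso z0 f _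
      _ ≤ (p:ℝ) * dist (f • z0) z0 := by
          apply mul_le_mul_of_nonneg_right _ dist_nonneg
          exact_mod_cast (Nat.mod_lt n hp0).le
  linarith

/-- Uniform bound on Gromov products between points of the `F`-ray and the `H`-ray. -/
lemma cross_ray_bound (hiso : IsIsomAction Γ X) (hyp : HypWith δ X) (hδ : 0 ≤ δ)
    (z0 : X) (f h F H : Γ) (p q : ℕ) (hp : 1 ≤ p) (hq : 1 ≤ q)
    (hF : F = f ^ p) (hH : H = h ^ q) (M : ℝ) (hM : 0 ≤ M)
    (hAF : gp z0 (F⁻¹ • z0) (F • z0) ≤ M) (hAH : gp z0 (H⁻¹ • z0) (H • z0) ≤ M)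
    (hgapF : 2*M + 3*δ + 1 ≤ dist (F • z0) z0) (hgapH : 2*M + 3*δ + 1 ≤ dist (H • z0) z0)
    (hfreq : ∀ N : ℕ, ∃ n, N ≤ n ∧ gp z0 ((f ^ n) • z0) ((h ^ n) • z0) < M) :
    ∃ M₀ : ℝ, 0 ≤ M₀ ∧ ∀ a b : ℕ, gp z0 ((F ^ a) • z0) ((H ^ b) • z0) ≤ M₀ := by
  have hcF : 1 ≤ dist (F • z0) z0 - 2*(M+δ) := by linarith
  have hcH : 1 ≤ dist (H • z0) z0 - 2*(M+δ) := by linarith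
  -- threshold for a
  obtain ⟨a₀, ha₀⟩ := exists_nat_ge (2*M + 4*δ + 1 + (p:ℝ) * dist (f • z0) z0)
  obtain ⟨b₀, hb₀⟩ := exists_nat_ge (2*M + 4*δ + 1 + (q:ℝ) * dist (h • z0) z0)
  refine ⟨max (M + 2*δ) (max ((a₀:ℝ) * ((p:ℝ) * dist (f • z0) z0))
    ((b₀:ℝ) * ((q:ℝ) * dist (h • z0) z0))), ?_, ?_⟩
  · refine le_trans ?_ (le_max_left _ _); linarith
  intro a b
  rcases lt_or_ge a a₀ with ha | ha
  · -- small a: trivial bound via distance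
    refine le_trans (gp_le_left _ _ _) (le_trans ?_ (le_trans (le_max_left _ _) (le_max_right _ _)))
    calc dist ((F ^ a) • z0) z0 ≤ (a:ℝ) * dist (F • z0) z0 := dist_pow_le hiso z0 F a
      _ ≤ (a:ℝ) * ((p:ℝ) * dist (f • z0) z0) := by
          apply mul_le_mul_of_nonneg_left _ (Nat.cast_nonneg a)
          rw [hF]
          exact dist_pow_le hiso z0 f p
      _ ≤ (a₀:ℝ) * ((p:ℝ) * dist (f • z0) z0) := by
          apply mul_le_mul_of_nonneg_right _ (by positivity)
          exact_mod_cast ha.le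
  rcases lt_or_ge b b₀ with hb | hb
  · refine le_trans (gp_le_right _ _ _) (le_trans ?_ (le_trans (le_max_right _ _) (le_max_right _ _)))
    calc dist ((H ^ b) • z0) z0 ≤ (b:ℝ) * dist (H • z0) z0 := dist_pow_le hiso z0 H b
      _ ≤ (b:ℝ) * ((q:ℝ) * dist (h • z0) z0) := by
          apply mul_le_mul_of_nonneg_left _ (Nat.cast_nonneg b)
          rw [hH]
          exact dist_pow_le hiso z0 h q
      _ ≤ (b₀:ℝ) * ((q:ℝ) * dist (h • z0) z0) := by
          apply mul_le_mul_of_nonneg_right _ (by positivity)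
          exact_mod_cast hb.le
  · -- main case
    obtain ⟨n, hn, hfr⟩ := hfreq (max (p*a) (q*b))
    have hK1 : M + 2*δ + 1 ≤ gp z0 ((F ^ a) • z0) ((f ^ n) • z0) := by
      have := ray_approx_lower hiso hyp hδ z0 f F p hp hF M hM hAF hgapF a n
        (le_trans (le_max_left _ _) hn)
      have haR : 2*M + 4*δ + 1 + (p:ℝ) * dist (f • z0) z0 ≤ (a:ℝ) := by
        refine le_trans ha₀ ?_; exact_mod_cast ha
      nlinarith [Nat.cast_nonneg (α := ℝ) a, dist_nonneg (x := (f • z0)) (y := z0),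
        mul_le_mul_of_nonneg_left hcF (Nat.cast_nonneg (α := ℝ) a)]
    have hK2 : M + 2*δ + 1 ≤ gp z0 ((H ^ b) • z0) ((h ^ n) • z0) := by
      have := ray_approx_lower hiso hyp hδ z0 h H q hq hH M hM hAH hgapH b n
        (le_trans (le_max_right _ _) hn)
      have hbR : 2*M + 4*δ + 1 + (q:ℝ) * dist (h • z0) z0 ≤ (b:ℝ) := by
        refine le_trans hb₀ ?_; exact_mod_cast hb
      nlinarith [Nat.cast_nonneg (α := ℝ) b, dist_nonneg (x := (h • z0)) (y := z0),
        mul_le_mul_of_nonneg_left hcH (Nat.cast_nonneg (α := ℝ) b)]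
    -- first flip
    have hQ : gp z0 ((F ^ a) • z0) ((h ^ n) • z0) ≤ M + δ :=
      gp_flip hyp (le_of_lt hfr) (by linarith)
    -- second flip
    have hQ' : gp z0 ((h ^ n) • z0) ((F ^ a) • z0) ≤ M + δ := by rwa [gp_comm]
    have hfinal : gp z0 ((H ^ b) • z0) ((F ^ a) • z0) ≤ (M + δ) + δ :=
      gp_flip hyp hQ' (by linarith)
    rw [gp_comm] at hfinal
    exact le_trans hfinal (le_trans (by linarith) (le_max_left _ _))

end Cross
section Selection

variable {X : Type*} [MetricSpace X] {Γ : Type*} [Group Γ] [MulAction Γ X] {δ : ℝ}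

lemma head_close (hiso : IsIsomAction Γ X) (z0 : X) (u v : Γ) (W : ℝ)
    (hinner : gp z0 (u⁻¹ • z0) (v • z0) ≤ W) :
    dist (u • z0) z0 - W ≤ gp z0 ((u * v) • z0) (u • z0) := by
  have key := gp_add_gp z0 (u • z0) ((u*v) • z0)
  have e : gp (u • z0) z0 ((u*v) • z0) = gp z0 (u⁻¹ • z0) (v • z0) := by
    have e1 : gp (u • z0) (u • (u⁻¹ • z0)) (u • (v • z0)) = gp z0 (u⁻¹ • z0) (v • z0) :=
      gp_smul hiso u _ _ _
    rw [smul_inv_smul, ← mul_smul] at e1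
    exact e1
  rw [e] at key
  rw [gp_comm z0 ((u*v) • z0) (u • z0), dist_comm (u • z0) z0]
  linarith

set_option maxHeartbeats 2000000 in
lemma selection_package (hiso : IsIsomAction Γ X) (hyp : HypWith δ X) (hδ : 0 ≤ δ)
    (z0 : X) (B : Set Γ) (hne : NonElementarySet z0 B) :
    ∃ C₀ : ℝ, 0 ≤ C₀ ∧ ∀ g : Γ, ∃ (s : Γ) (ms : ℕ), 1 ≤ ms ∧ s ∈ B ^ ms ∧
      2*C₀ + 3*δ + 1 ≤ dist (s • z0) z0 ∧
      gp z0 (g⁻¹ • z0) (s • z0) ≤ C₀ ∧ gp z0 (s⁻¹ • z0) (g • z0) ≤ C₀ := by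
  obtain ⟨f, h, hfc, hhc, hlf, hlh, hef, heh, hcross⟩ := hne
  obtain ⟨kf, hkf1, hkfmem⟩ := mem_pow_of_mem_closure hfc
  obtain ⟨kh, hkh1, hkhmem⟩ := mem_pow_of_mem_closure hhc
  obtain ⟨Mf, hMf0, hMf⟩ := not_sameEnd_frequent hef
  obtain ⟨Mh, hMh0, hMh⟩ := not_sameEnd_frequent heh
  obtain ⟨Mtt, hMtt0, hMtt⟩ := not_sameEnd_frequent (hcross true true)
  obtain ⟨Mtf, hMtf0, hMtf⟩ := not_sameEnd_frequent (hcross true false)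
  obtain ⟨Mft, hMft0, hMft⟩ := not_sameEnd_frequent (hcross false true)
  obtain ⟨Mff, hMff0, hMff⟩ := not_sameEnd_frequent (hcross false false)
  set M : ℝ := max (max Mf Mh) (max (max Mtt Mtf) (max Mft Mff)) with hM
  have hM0 : 0 ≤ M := le_trans hMf0 (le_trans (le_max_left _ _) (le_max_left _ _))
  -- choose the power p for f
  obtain ⟨N₁, hN₁⟩ := dist_pow_large hiso z0 hlf (2*M + 3*δ + 1)
  obtain ⟨p, hpN, hpfr⟩ := hMf (max N₁ 1)
  have hp1 : 1 ≤ p := le_trans (le_max_right _ _) hpN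
  set F : Γ := f ^ p with hF
  have hAF : gp z0 (F⁻¹ • z0) (F • z0) ≤ M := by
    rw [raySeq_true_eq, raySeq_false_eq] at hpfr
    rw [gp_comm] at hpfr
    rw [hF, ← inv_pow]
    exact le_trans hpfr.le (le_trans (le_max_left _ _) (le_max_left _ _))
  have hgapF : 2*M + 3*δ + 1 ≤ dist (F • z0) z0 :=
    hN₁ p (le_trans (le_max_left _ _) hpN)
  -- choose the power q for h
  obtain ⟨N₂, hN₂⟩ := dist_pow_large hiso z0 hlh (2*M + 3*δ + 1)
  obtain ⟨q, hqN, hqfr⟩ := hMh (max N₂ 1)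
  have hq1 : 1 ≤ q := le_trans (le_max_right _ _) hqN
  set H : Γ := h ^ q with hH
  have hAH : gp z0 (H⁻¹ • z0) (H • z0) ≤ M := by
    rw [raySeq_true_eq, raySeq_false_eq] at hqfr
    rw [gp_comm] at hqfr
    rw [hH, ← inv_pow]
    exact le_trans hqfr.le (le_trans (le_max_right _ _) (le_max_left _ _))
  have hgapH : 2*M + 3*δ + 1 ≤ dist (H • z0) z0 :=
    hN₂ q (le_trans (le_max_left _ _) hqN)
  -- inverse versions
  have hAFi : gp z0 ((F⁻¹)⁻¹ • z0) (F⁻¹ • z0) ≤ M := by rw [inv_inv, gp_comm]; exact hAF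
  have hAHi : gp z0 ((H⁻¹)⁻¹ • z0) (H⁻¹ • z0) ≤ M := by rw [inv_inv, gp_comm]; exact hAH
  have hgapFi : 2*M + 3*δ + 1 ≤ dist (F⁻¹ • z0) z0 := by rw [dist_inv_smul hiso]; exact hgapF
  have hgapHi : 2*M + 3*δ + 1 ≤ dist (H⁻¹ • z0) z0 := by rw [dist_inv_smul hiso]; exact hgapH
  -- the four cross-ray bounds
  have hfrPP : ∀ N : ℕ, ∃ n, N ≤ n ∧ gp z0 ((f ^ n) • z0) ((h ^ n) • z0) < M := by
    intro N
    obtain ⟨n, hn, hlt⟩ := hMtt N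
    rw [raySeq_true_eq, raySeq_true_eq] at hlt
    exact ⟨n, hn, lt_of_lt_of_le hlt (by
      refine le_trans (le_max_left _ _) (le_trans (le_max_left _ _) (le_max_right _ _)))⟩
  have hfrPM : ∀ N : ℕ, ∃ n, N ≤ n ∧ gp z0 ((f ^ n) • z0) (((h⁻¹) ^ n) • z0) < M := by
    intro N
    obtain ⟨n, hn, hlt⟩ := hMtf N
    rw [raySeq_true_eq, raySeq_false_eq] at hlt
    exact ⟨n, hn, lt_of_lt_of_le hlt (by
      refine le_trans (le_max_right _ _) (le_trans (le_max_left _ _) (le_max_right _ _)))⟩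
  have hfrMP : ∀ N : ℕ, ∃ n, N ≤ n ∧ gp z0 (((f⁻¹) ^ n) • z0) ((h ^ n) • z0) < M := by
    intro N
    obtain ⟨n, hn, hlt⟩ := hMft N
    rw [raySeq_false_eq, raySeq_true_eq] at hlt
    exact ⟨n, hn, lt_of_lt_of_le hlt (by
      refine le_trans (le_max_left _ _) (le_trans (le_max_right _ _) (le_max_right _ _)))⟩
  have hfrMM : ∀ N : ℕ, ∃ n, N ≤ n ∧ gp z0 (((f⁻¹) ^ n) • z0) (((h⁻¹) ^ n) • z0) < M := by
    intro N
    obtain ⟨n, hn, hlt⟩ := hMff N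
    rw [raySeq_false_eq, raySeq_false_eq] at hlt
    exact ⟨n, hn, lt_of_lt_of_le hlt (by
      refine le_trans (le_max_right _ _) (le_trans (le_max_right _ _) (le_max_right _ _)))⟩
  obtain ⟨Wpp, hWpp0, hWpp⟩ := cross_ray_bound hiso hyp hδ z0 f h F H p q hp1 hq1 hF hH
    M hM0 hAF hAH hgapF hgapH hfrPP
  obtain ⟨Wpm, hWpm0, hWpm⟩ := cross_ray_bound hiso hyp hδ z0 f h⁻¹ F H⁻¹ p q hp1 hq1 hF
    (by rw [hH, inv_pow]) M hM0 hAF hAHi hgapF hgapHi hfrPM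
  obtain ⟨Wmp, hWmp0, hWmp⟩ := cross_ray_bound hiso hyp hδ z0 f⁻¹ h F⁻¹ H p q hp1 hq1
    (by rw [hF, inv_pow]) hH M hM0 hAFi hAH hgapFi hgapH hfrMP
  obtain ⟨Wmm, hWmm0, hWmm⟩ := cross_ray_bound hiso hyp hδ z0 f⁻¹ h⁻¹ F⁻¹ H⁻¹ p q hp1 hq1
    (by rw [hF, inv_pow]) (by rw [hH, inv_pow]) M hM0 hAFi hAHi hgapFi hgapHi hfrMM
  set W : ℝ := max (max (max Wpp Wpm) (max Wmp Wmm)) (M + 2*δ) with hWdef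
  have hW0 : 0 ≤ W := le_trans hWpp0 (le_trans (le_max_left _ _)
    (le_trans (le_max_left _ _) (le_max_left _ _)))
  have hWpp' : ∀ a b : ℕ, gp z0 ((F ^ a) • z0) ((H ^ b) • z0) ≤ W := fun a b =>
    le_trans (hWpp a b) (le_trans (le_trans (le_max_left _ _) (le_max_left _ _)) (le_max_left _ _))
  have hWpm' : ∀ a b : ℕ, gp z0 ((F ^ a) • z0) (((H⁻¹) ^ b) • z0) ≤ W := fun a b =>
    le_trans (hWpm a b) (le_trans (le_trans (le_max_right _ _) (le_max_left _ _)) (le_max_left _ _))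
  have hWmp' : ∀ a b : ℕ, gp z0 (((F⁻¹) ^ a) • z0) ((H ^ b) • z0) ≤ W := fun a b =>
    le_trans (hWmp a b) (le_trans (le_trans (le_max_left _ _) (le_max_right _ _)) (le_max_left _ _))
  have hWmm' : ∀ a b : ℕ, gp z0 (((F⁻¹) ^ a) • z0) (((H⁻¹) ^ b) • z0) ≤ W := fun a b =>
    le_trans (hWmm a b) (le_trans (le_trans (le_max_right _ _) (le_max_right _ _)) (le_max_left _ _))
  set C₀ : ℝ := W + 4*δ + 1 with hC₀def
  have hC₀0 : 0 ≤ C₀ := by simp only [hC₀def]; linarith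
  -- choose N
  obtain ⟨N', hN'⟩ := exists_nat_ge (2*W + 2*C₀ + 5*δ + 5 + (M + 2*δ))
  set N : ℕ := N' + 1 with hNdef
  have hN1 : 1 ≤ N := by omega
  have hNR : 2*W + 2*C₀ + 5*δ + 5 + (M + 2*δ) ≤ (N:ℝ) := by
    refine le_trans hN' ?_
    exact_mod_cast Nat.le_succ N'
  have hcF : 1 ≤ dist (F • z0) z0 - 2*(M+δ) := by linarith
  have hcH : 1 ≤ dist (H • z0) z0 - 2*(M+δ) := by linarith
  -- distance lower bounds for ray points
  have hDF : ∀ a b : ℕ, a ≤ b →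
      (a:ℝ) * (dist (F • z0) z0 - 2*(M+δ)) - (M + 2*δ) ≤ dist ((F ^ b) • z0) z0 := by
    intro a b hab
    have h1 := ray_same_lower hiso hyp hδ z0 F M hM0 hAF hgapF a b hab
    have h2 := gp_le_right z0 ((F ^ a) • z0) ((F ^ b) • z0)
    linarith
  have hDH : ∀ a b : ℕ, a ≤ b →
      (a:ℝ) * (dist (H • z0) z0 - 2*(M+δ)) - (M + 2*δ) ≤ dist ((H ^ b) • z0) z0 := by
    intro a b hab
    have h1 := ray_same_lower hiso hyp hδ z0 H M hM0 hAH hgapH a b hab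
    have h2 := gp_le_right z0 ((H ^ a) • z0) ((H ^ b) • z0)
    linarith
  have hbigF : ∀ b : ℕ, N ≤ b → 2*W + 2*C₀ + 5*δ + 5 ≤ dist ((F ^ b) • z0) z0 := by
    intro b hb
    have := hDF N b hb
    nlinarith [mul_le_mul_of_nonneg_left hcF (Nat.cast_nonneg (α := ℝ) N)]
  have hbigH : ∀ b : ℕ, N ≤ b → 2*W + 2*C₀ + 5*δ + 5 ≤ dist ((H ^ b) • z0) z0 := by
    intro b hb
    have := hDH N b hb
    nlinarith [mul_le_mul_of_nonneg_left hcH (Nat.cast_nonneg (α := ℝ) N)]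
  -- head/tail closeness for the composite candidates
  have hhead3 : dist ((F ^ N) • z0) z0 - W ≤ gp z0 (((F ^ N) * (H ^ N)) • z0) ((F ^ N) • z0) := by
    refine head_close hiso z0 (F ^ N) (H ^ N) W ?_
    rw [← inv_pow]
    exact hWmp' N N
  have hhead4 : dist ((H ^ N) • z0) z0 - W ≤ gp z0 (((H ^ N) * (F ^ N)) • z0) ((H ^ N) • z0) := by
    refine head_close hiso z0 (H ^ N) (F ^ N) W ?_
    rw [← inv_pow, gp_comm]
    exact hWpm' N N
  have htail3 : dist (((H⁻¹) ^ N) • z0) z0 - W ≤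
      gp z0 ((((H⁻¹) ^ N) * ((F⁻¹) ^ N)) • z0) (((H⁻¹) ^ N) • z0) := by
    refine head_close hiso z0 ((H⁻¹) ^ N) ((F⁻¹) ^ N) W ?_
    rw [← inv_pow, inv_inv, gp_comm]
    exact hWmp' N N
  have htail4 : dist (((F⁻¹) ^ N) • z0) z0 - W ≤
      gp z0 ((((F⁻¹) ^ N) * ((H⁻¹) ^ N)) • z0) (((F⁻¹) ^ N) • z0) := by
    refine head_close hiso z0 ((F⁻¹) ^ N) ((H⁻¹) ^ N) W ?_
    rw [← inv_pow, inv_inv]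
    exact hWpm' N N
  -- distance bounds for inverse-ray points
  have hdistinv : ∀ (u : Γ) (b : ℕ), dist (((u⁻¹) ^ b) • z0) z0 = dist ((u ^ b) • z0) z0 := by
    intro u b
    rw [inv_pow, dist_inv_smul hiso]
  have hbigFi : ∀ b : ℕ, N ≤ b → 2*W + 2*C₀ + 5*δ + 5 ≤ dist (((F⁻¹) ^ b) • z0) z0 := by
    intro b hb; rw [hdistinv]; exact hbigF b hb
  have hbigHi : ∀ b : ℕ, N ≤ b → 2*W + 2*C₀ + 5*δ + 5 ≤ dist (((H⁻¹) ^ b) • z0) z0 := by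
    intro b hb; rw [hdistinv]; exact hbigH b hb
  -- head-pair bounds
  have hp12 : gp z0 ((F ^ (2*N)) • z0) ((H ^ (2*N)) • z0) ≤ W + 2*δ :=
    le_trans (hWpp' (2*N) (2*N)) (by linarith)
  have hp32 : gp z0 (((F ^ N) * (H ^ N)) • z0) ((H ^ (2*N)) • z0) ≤ W + δ :=
    gp_flip hyp (hWpp' N (2*N)) (by linarith [hhead3, hbigF N le_rfl])
  have hp41 : gp z0 (((H ^ N) * (F ^ N)) • z0) ((F ^ (2*N)) • z0) ≤ W + δ :=
    gp_flip hyp (by rw [gp_comm]; exact hWpp' (2*N) N) (by linarith [hhead4, hbigH N le_rfl])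
  have hp4F : gp z0 (((H ^ N) * (F ^ N)) • z0) ((F ^ N) • z0) ≤ W + δ :=
    gp_flip hyp (by rw [gp_comm]; exact hWpp' N N) (by linarith [hhead4, hbigH N le_rfl])
  have hp34 : gp z0 (((F ^ N) * (H ^ N)) • z0) (((H ^ N) * (F ^ N)) • z0) ≤ (W + δ) + δ :=
    gp_flip hyp (by rw [gp_comm]; exact hp4F) (by linarith [hhead3, hbigF N le_rfl])
  -- tail-pair bounds
  have ht12 : gp z0 (((F⁻¹) ^ (2*N)) • z0) (((H⁻¹) ^ (2*N)) • z0) ≤ W + 2*δ :=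
    le_trans (hWmm' (2*N) (2*N)) (by linarith)
  have ht31 : gp z0 ((((H⁻¹) ^ N) * ((F⁻¹) ^ N)) • z0) (((F⁻¹) ^ (2*N)) • z0) ≤ W + δ :=
    gp_flip hyp (by rw [gp_comm]; exact hWmm' (2*N) N) (by linarith [htail3, hbigHi N le_rfl])
  have ht42 : gp z0 ((((F⁻¹) ^ N) * ((H⁻¹) ^ N)) • z0) (((H⁻¹) ^ (2*N)) • z0) ≤ W + δ :=
    gp_flip hyp (hWmm' N (2*N)) (by linarith [htail4, hbigFi N le_rfl])
  have ht3F : gp z0 ((((H⁻¹) ^ N) * ((F⁻¹) ^ N)) • z0) (((F⁻¹) ^ N) • z0) ≤ W + δ :=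
    gp_flip hyp (by rw [gp_comm]; exact hWmm' N N) (by linarith [htail3, hbigHi N le_rfl])
  have ht43 : gp z0 ((((F⁻¹) ^ N) * ((H⁻¹) ^ N)) • z0)
      ((((H⁻¹) ^ N) * ((F⁻¹) ^ N)) • z0) ≤ (W + δ) + δ :=
    gp_flip hyp (by rw [gp_comm]; exact ht3F) (by linarith [htail4, hbigFi N le_rfl])
  -- exclusivity
  have hexcl : ∀ y a b : X, gp z0 a b ≤ W + 2*δ → C₀ < gp z0 y a → gp z0 y b ≤ C₀ := by
    intro y a b hab hya
    by_contra hcon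
    push_neg at hcon
    have h4 := hyp z0 a b y
    have hmin : C₀ < min (gp z0 y a) (gp z0 y b) := lt_min hya hcon
    have h5 : C₀ - δ < gp z0 a b := by linarith [hmin, h4]
    simp only [hC₀def] at h5
    linarith
  -- memberships
  have hFmem : F ∈ B ^ (kf * p) := by rw [hF]; exact pow_mem_pow_mul hkfmem p
  have hHmem : H ∈ B ^ (kh * q) := by rw [hH]; exact pow_mem_pow_mul hkhmem q
  have hmem1 : F ^ (2*N) ∈ B ^ (kf * p * (2*N)) := pow_mem_pow_mul hFmem (2*N)
  have hmem2 : H ^ (2*N) ∈ B ^ (kh * q * (2*N)) := pow_mem_pow_mul hHmem (2*N)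
  have hmem3 : (F ^ N) * (H ^ N) ∈ B ^ (kf * p * N + kh * q * N) := by
    rw [pow_add]
    exact Set.mul_mem_mul (pow_mem_pow_mul hFmem N) (pow_mem_pow_mul hHmem N)
  have hmem4 : (H ^ N) * (F ^ N) ∈ B ^ (kh * q * N + kf * p * N) := by
    rw [pow_add]
    exact Set.mul_mem_mul (pow_mem_pow_mul hHmem N) (pow_mem_pow_mul hFmem N)
  have hposF : 0 < kf * p * N := Nat.mul_pos (Nat.mul_pos hkf1 hp1) (by omega)
  have hposH : 0 < kh * q * N := Nat.mul_pos (Nat.mul_pos hkh1 hq1) (by omega)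
  have hposF2 : 0 < kf * p * (2*N) := Nat.mul_pos (Nat.mul_pos hkf1 hp1) (by omega)
  have hposH2 : 0 < kh * q * (2*N) := Nat.mul_pos (Nat.mul_pos hkh1 hq1) (by omega)
  -- displacements of the four candidates
  have hd1 : 2*C₀ + 3*δ + 1 ≤ dist ((F ^ (2*N)) • z0) z0 := by
    have := hbigF (2*N) (by omega); linarith
  have hd2 : 2*C₀ + 3*δ + 1 ≤ dist ((H ^ (2*N)) • z0) z0 := by
    have := hbigH (2*N) (by omega); linarith
  have hd3 : 2*C₀ + 3*δ + 1 ≤ dist (((F ^ N) * (H ^ N)) • z0) z0 := by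
    have h1 := gp_le_left z0 (((F ^ N) * (H ^ N)) • z0) ((F ^ N) • z0)
    have := hbigF N le_rfl
    linarith [hhead3]
  have hd4 : 2*C₀ + 3*δ + 1 ≤ dist (((H ^ N) * (F ^ N)) • z0) z0 := by
    have h1 := gp_le_left z0 (((H ^ N) * (F ^ N)) • z0) ((H ^ N) • z0)
    have := hbigH N le_rfl
    linarith [hhead4]
  -- inverse equalities
  have hinv1 : (F ^ (2*N))⁻¹ • z0 = ((F⁻¹) ^ (2*N)) • z0 := by rw [inv_pow]
  have hinv2 : (H ^ (2*N))⁻¹ • z0 = ((H⁻¹) ^ (2*N)) • z0 := by rw [inv_pow]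
  have hinv3 : ((F ^ N) * (H ^ N))⁻¹ • z0 = (((H⁻¹) ^ N) * ((F⁻¹) ^ N)) • z0 := by
    rw [mul_inv_rev, inv_pow, inv_pow]
  have hinv4 : ((H ^ N) * (F ^ N))⁻¹ • z0 = (((F⁻¹) ^ N) * ((H⁻¹) ^ N)) • z0 := by
    rw [mul_inv_rev, inv_pow, inv_pow]
  refine ⟨C₀, hC₀0, fun g => ?_⟩
  by_cases hin : C₀ < gp z0 (g⁻¹ • z0) ((F ^ (2*N)) • z0) ∨
      C₀ < gp z0 (g⁻¹ • z0) (((F ^ N) * (H ^ N)) • z0)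
  · by_cases hout : C₀ < gp z0 (g • z0) (((F⁻¹) ^ (2*N)) • z0) ∨
        C₀ < gp z0 (g • z0) ((((F⁻¹) ^ N) * ((H⁻¹) ^ N)) • z0)
    · -- use s₂ = H^(2N)
      refine ⟨H ^ (2*N), kh * q * (2*N), hposH2, hmem2, hd2, ?_, ?_⟩
      · rcases hin with hbad | hbad
        · exact hexcl _ _ _ hp12 hbad
        · exact hexcl _ _ _ (le_trans hp32 (by linarith)) hbad
      · rw [gp_comm, hinv2]
        rcases hout with hbad | hbad
        · exact hexcl _ _ _ ht12 hbad
        · exact hexcl _ _ _ (le_trans ht42 (by linarith)) hbad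
    · -- use s₄ = H^N * F^N
      push_neg at hout
      refine ⟨(H ^ N) * (F ^ N), kh * q * N + kf * p * N, by omega, hmem4, hd4, ?_, ?_⟩
      · rcases hin with hbad | hbad
        · exact hexcl _ _ _ (by rw [gp_comm]; exact le_trans hp41 (by linarith)) hbad
        · exact hexcl _ _ _ (le_trans hp34 (by linarith)) hbad
      · rw [gp_comm, hinv4]
        exact hout.2
  · by_cases hout : C₀ < gp z0 (g • z0) (((F⁻¹) ^ (2*N)) • z0) ∨
        C₀ < gp z0 (g • z0) ((((F⁻¹) ^ N) * ((H⁻¹) ^ N)) • z0)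
    · -- use s₃ = F^N * H^N
      push_neg at hin
      refine ⟨(F ^ N) * (H ^ N), kf * p * N + kh * q * N, by omega, hmem3, hd3, hin.2, ?_⟩
      rw [gp_comm, hinv3]
      rcases hout with hbad | hbad
      · exact hexcl _ _ _ (by rw [gp_comm]; exact le_trans ht31 (by linarith)) hbad
      · exact hexcl _ _ _ (le_trans ht43 (by linarith)) hbad
    · -- use s₁ = F^(2N)
      push_neg at hin
      push_neg at hout
      refine ⟨F ^ (2*N), kf * p * (2*N), hposF2, hmem1, hd1, hin.1, ?_⟩
      rw [gp_comm, hinv1]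
      exact hout.1

end Selection
section Final

variable {X : Type*} [MetricSpace X] {Γ : Type*} [Group Γ] [MulAction Γ X] {δ : ℝ}

lemma arithmetic_bound (hiso : IsIsomAction Γ X) (hyp : HypWith δ X) (hδ : 0 ≤ δ)
    (z0 : X) (B : Set Γ) (hne : NonElementarySet z0 B)
    (hari : ∀ (n : ℕ) (g₁ g₂ : Γ), g₁ ∈ B ^ n → g₂ ∈ B ^ n →
      stableLength z0 g₁ = stableLength z0 g₂) :
    ∃ lam C : ℝ, 0 ≤ lam ∧ 0 ≤ C ∧
      (∀ (n : ℕ) (g : Γ), g ∈ B ^ n → stableLength z0 g = n * lam) ∧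
      (∀ (n : ℕ) (g : Γ), g ∈ B ^ n → dist (g • z0) z0 ≤ n * lam + C) := by
  obtain ⟨b, hb⟩ := nonempty_of_nonelementary hne
  set lam := stableLength z0 b with hlamdef
  have hlam0 : 0 ≤ lam := stableLength_nonneg z0 b
  have hSL : ∀ (n : ℕ) (g : Γ), g ∈ B ^ n → stableLength z0 g = n * lam := by
    intro n g hg
    have hbn : b ^ n ∈ B ^ n := Set.pow_mem_pow hb
    rw [hari n g (b ^ n) hg hbn, stableLength_pow hiso z0 b n]
  obtain ⟨C₀, hC₀0, hsel⟩ := selection_package hiso hyp hδ z0 B hne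
  refine ⟨lam, max (2*C₀ + 3*δ + 1) (4*(C₀+δ)), hlam0,
    le_max_of_le_left (by linarith), hSL, ?_⟩
  intro n g hg
  rcases lt_or_ge (dist (g • z0) z0) (2*C₀ + 3*δ + 1) with hsmall | hbig
  · have h1 : (0:ℝ) ≤ (n:ℝ) * lam := by positivity
    have h2 : 2*C₀ + 3*δ + 1 ≤ max (2*C₀ + 3*δ + 1) (4*(C₀+δ)) := le_max_left _ _
    linarith
  · obtain ⟨s, ms, hms1, hmss, hds, hgs1, hgs2⟩ := hsel g
    have hchain := stableLength_mul_ge hiso hyp hδ z0 g s C₀ hC₀0 hgs1 hgs2 hbig hds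
    have hgsmem : g * s ∈ B ^ (n + ms) := by
      rw [pow_add]; exact Set.mul_mem_mul hg hmss
    have hSLgs : stableLength z0 (g * s) = ((n + ms : ℕ) : ℝ) * lam := hSL _ _ hgsmem
    have hSLs : stableLength z0 s = (ms:ℝ) * lam := hSL _ _ hmss
    have hdsSL : (ms:ℝ) * lam ≤ dist (s • z0) z0 := by
      rw [← hSLs]; exact stableLength_le_dist z0 s
    have h2 : 4*(C₀+δ) ≤ max (2*C₀ + 3*δ + 1) (4*(C₀+δ)) := le_max_right _ _
    rw [hSLgs] at hchain
    push_cast at hchain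
    linarith

lemma tendsto_mul_atTop_nat (m : ℕ) (hm : 1 ≤ m) :
    Filter.Tendsto (fun k : ℕ => m * k) Filter.atTop Filter.atTop :=
  Filter.tendsto_atTop_atTop.mpr fun b => ⟨b, fun n hn => le_trans hn (Nat.le_mul_of_pos_left n hm)⟩

lemma subadd_tendsto {v : ℕ → ℝ} (hsub : Subadditive v) (hv0 : ∀ n, 0 ≤ v n) :
    Filter.Tendsto (fun n : ℕ => v n / n) Filter.atTop (nhds hsub.lim) :=
  hsub.tendsto_lim ⟨0, by rintro r ⟨m, rfl⟩; exact div_nonneg (hv0 m) (Nat.cast_nonneg m)⟩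

lemma subadd_tendsto_subseq {v : ℕ → ℝ} (hsub : Subadditive v) (hv0 : ∀ n, 0 ≤ v n)
    (m : ℕ) (hm : 1 ≤ m) :
    Filter.Tendsto (fun k : ℕ => v (m*k) / ((m*k : ℕ) : ℝ)) Filter.atTop (nhds hsub.lim) := by
  have h1 := (subadd_tendsto hsub hv0).comp (tendsto_mul_atTop_nat m hm)
  exact h1.congr fun k => by simp [Function.comp]

lemma tendsto_SL_div (hiso : IsIsomAction Γ X) (z0 : X) (g : Γ) (m : ℕ) :
    Filter.Tendsto (fun k : ℕ => dist ((g ^ k) • z0) z0 / ((m*k : ℕ) : ℝ)) Filter.atTop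
      (nhds (stableLength z0 g / m)) := by
  have t0 := (tendsto_stableLength hiso z0 g).div_const (m:ℝ)
  refine t0.congr fun k => ?_
  push_cast
  rw [div_div, mul_comm]

end Final

/-- **Proposition (characterization of non-arithmeticity).** A non-elementary subset `B`
of isometries of a geodesic Gromov-hyperbolic space is non-arithmetic if and only if
`ℓ_sub(B) ≠ ℓ(B)`. -/
theorem nonarithmetic_iff_displacements_differ
    {X : Type*} [MetricSpace X] {Γ : Type*} [Group Γ] [MulAction Γ X]
    (hiso : IsIsomAction Γ X) (hgeo : GeodesicSpace X) (hhyp : GromovHyperbolic X)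
    (z0 : X) (B : Set Γ) (hne : NonElementarySet z0 B) :
    ∃ L LSub : ENNReal,
      Tendsto (fun n : ℕ => dispSup z0 B n / n) atTop (𝓝 L) ∧
      Tendsto (fun n : ℕ => dispInf z0 B n / n) atTop (𝓝 LSub) ∧
      (NonArithmetic z0 B ↔ LSub ≠ L) := by
  obtain ⟨δ, hδ0, hyp⟩ := hhyp
  have hδ : 0 ≤ δ := hδ0.le
  have hB : B.Nonempty := nonempty_of_nonelementary hne
  obtain ⟨ui, huisub, hui0, huile, huiapp, huieq⟩ := dispInf_facts hiso z0 hB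
  have hLSubT : Tendsto (fun n : ℕ => dispInf z0 B n / n) atTop
      (𝓝 (ENNReal.ofReal huisub.lim)) :=
    tendsto_disp_ennreal ui _ huieq huisub hui0
  by_cases hNA : NonArithmetic z0 B
  · by_cases htop : dispSup z0 B 1 = ⊤
    · refine ⟨⊤, ENNReal.ofReal huisub.lim, ?_, hLSubT, iff_of_true hNA (by simp)⟩
      have hall := dispSup_top_forall hiso z0 hB htop
      have hev : (fun _ : ℕ => (⊤ : ENNReal)) =ᶠ[atTop] fun n : ℕ => dispSup z0 B n / n := by
        filter_upwards [Filter.eventually_ge_atTop 1] with n hn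
        symm
        rw [ENNReal.div_eq_top]
        exact Or.inr ⟨hall n hn, ENNReal.natCast_ne_top n⟩
      exact Filter.Tendsto.congr' hev tendsto_const_nhds
    · have hK : ∀ g ∈ B, dist (g • z0) z0 ≤ (dispSup z0 B 1).toReal := by
        intro g hg
        have h1 : ENNReal.ofReal (dist (g • z0) z0) ≤ dispSup z0 B 1 := by
          refine le_iSup₂ (f := fun g (_ : g ∈ B ^ 1) => ENNReal.ofReal (dist (g • z0) z0)) g ?_
          rwa [pow_one]
        have h2 := ENNReal.toReal_mono htop h1
        rwa [ENNReal.toReal_ofReal dist_nonneg] at h2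
      obtain ⟨us, hussub, hus0, husle, husapp, huseq⟩ :=
        dispSup_facts hiso z0 hB hK ENNReal.toReal_nonneg
      refine ⟨ENNReal.ofReal hussub.lim, ENNReal.ofReal huisub.lim,
        tendsto_disp_ennreal us _ huseq hussub hus0, hLSubT, iff_of_true hNA ?_⟩
      obtain ⟨m, g₁, g₂, hg₁, hg₂, hSLne⟩ := hNA
      have hm1 : 1 ≤ m := by
        rcases Nat.eq_zero_or_pos m with h0 | h
        · subst h0
          rw [pow_zero] at hg₁ hg₂
          exact absurd (by rw [Set.mem_one.mp hg₁, Set.mem_one.mp hg₂]) hSLne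
        · exact h
      have hm0 : (0:ℝ) < m := by exact_mod_cast hm1
      have hA : ∀ g ∈ B ^ m, huisub.lim ≤ stableLength z0 g / m := by
        intro g hg
        have t1 := subadd_tendsto_subseq huisub hui0 m hm1
        have t2 := tendsto_SL_div hiso z0 g m
        refine le_of_tendsto_of_tendsto t1 t2 ?_
        refine Filter.Eventually.of_forall fun k => ?_
        have hmem : g ^ k ∈ B ^ (m * k) := pow_mem_pow_mul hg k
        exact div_le_div_of_nonneg_right (huile (m*k) (g^k) hmem) (Nat.cast_nonneg _)
      have hBs : ∀ g ∈ B ^ m, stableLength z0 g / m ≤ hussub.lim := by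
        intro g hg
        have t1 := subadd_tendsto_subseq hussub hus0 m hm1
        refine ge_of_tendsto t1 ?_
        filter_upwards [Filter.eventually_ge_atTop 1] with k hk
        have hmem : g ^ k ∈ B ^ (m * k) := pow_mem_pow_mul hg k
        have h1 := husle (m*k) (g^k) hmem
        have h2 := mul_stableLength_le z0 g k
        have hk0 : (0:ℝ) < k := by exact_mod_cast hk
        rw [div_le_div_iff₀ hm0 (by positivity : (0:ℝ) < ((m*k:ℕ):ℝ))]
        push_cast
        have h4 : (m:ℝ) * ((k:ℝ) * stableLength z0 g) ≤ (m:ℝ) * us (m*k) :=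
          mul_le_mul_of_nonneg_left (le_trans h2 h1) hm0.le
        nlinarith [h4]
      have hlt : huisub.lim < hussub.lim := by
        rcases lt_or_gt_of_ne hSLne with hl | hl
        · have h3 : stableLength z0 g₁ / m < stableLength z0 g₂ / m := by
            rw [div_lt_div_iff₀ hm0 hm0]
            nlinarith
          linarith [hA g₁ hg₁, hBs g₂ hg₂]
        · have h3 : stableLength z0 g₂ / m < stableLength z0 g₁ / m := by
            rw [div_lt_div_iff₀ hm0 hm0]
            nlinarith
          linarith [hA g₂ hg₂, hBs g₁ hg₁]
      have h0 : 0 ≤ huisub.lim := subadd_lim_nonneg huisub hui0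
      exact ne_of_lt ((ENNReal.ofReal_lt_ofReal_iff (by linarith)).mpr hlt)
  · have hari : ∀ (n : ℕ) (g₁ g₂ : Γ), g₁ ∈ B ^ n → g₂ ∈ B ^ n →
        stableLength z0 g₁ = stableLength z0 g₂ := by
      intro n g₁ g₂ h1 h2
      by_contra hc
      exact hNA ⟨n, g₁, g₂, h1, h2, hc⟩
    obtain ⟨lam, C, hlam0, hC0, hSLall, hdall⟩ := arithmetic_bound hiso hyp hδ z0 B hne hari
    have hK : ∀ g ∈ B, dist (g • z0) z0 ≤ lam + C := by
      intro g hg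
      have := hdall 1 g (by rwa [pow_one])
      push_cast at this
      linarith
    obtain ⟨us, hussub, hus0, husle, husapp, huseq⟩ := dispSup_facts hiso z0 hB hK (by linarith)
    have t_ui := subadd_tendsto huisub hui0
    have t_us := subadd_tendsto hussub hus0
    have hub : ∀ n : ℕ, us n ≤ n * lam + C := by
      intro n
      refine le_of_forall_pos_le_add fun ε hε => ?_
      obtain ⟨g, hg, hlt⟩ := husapp n ε hε
      have := hdall n g hg
      linarith
    have hlb : ∀ n : ℕ, (n:ℝ) * lam ≤ ui n := by
      intro n
      refine le_of_forall_pos_le_add fun ε hε => ?_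
      obtain ⟨g, hg, hlt⟩ := huiapp n ε hε
      have h1 := hSLall n g hg
      have h2 := stableLength_le_dist z0 g
      linarith
    have h1 : hussub.lim ≤ lam := by
      have tR : Tendsto (fun n : ℕ => lam + C / n) atTop (𝓝 (lam + 0)) :=
        tendsto_const_nhds.add (tendsto_const_div_atTop_nhds_zero_nat C)
      rw [add_zero] at tR
      refine le_of_tendsto_of_tendsto t_us tR ?_
      filter_upwards [Filter.eventually_ge_atTop 1] with n hn
      have hn0 : (0:ℝ) < n := by exact_mod_cast hn
      have he : lam + C / n = ((n:ℝ) * lam + C)/n := by field_simp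
      show us n / n ≤ lam + C / n
      rw [he]
      exact div_le_div_of_nonneg_right (hub n) hn0.le
    have h2 : lam ≤ huisub.lim := by
      refine ge_of_tendsto t_ui ?_
      filter_upwards [Filter.eventually_ge_atTop 1] with n hn
      have hn0 : (0:ℝ) < n := by exact_mod_cast hn
      show lam ≤ ui n / n
      rw [le_div_iff₀ hn0]
      have := hlb n
      linarith [mul_comm lam (n:ℝ)]
    have h3 : huisub.lim ≤ hussub.lim := by
      refine le_of_tendsto_of_tendsto t_ui t_us ?_
      refine Filter.Eventually.of_forall fun n => ?_
      obtain ⟨g, hg⟩ := pow_set_nonempty hB n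
      exact div_le_div_of_nonneg_right (le_trans (huile n g hg) (husle n g hg)) (Nat.cast_nonneg n)
    have heq : huisub.lim = hussub.lim := le_antisymm h3 (le_trans h1 h2)
    exact ⟨ENNReal.ofReal hussub.lim, ENNReal.ofReal huisub.lim,
      tendsto_disp_ennreal us _ huseq hussub hus0, hLSubT,
      iff_of_false hNA (by rw [heq]; exact fun hc => hc rfl)⟩

end BMS
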